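/- Let ξ ∈ (0,1) be a BR-number and let N ≥ 0 have ξ-Ostrowski representation N = ∑_{i=0}^{j} b_i·q_i. Then S_N(2ξ) = 0 if and only if b_i = 0 for every even index i. -/

import Mathlib

/-- The deterministic random walk `S_n(ξ) = ∑_{j=1}^n (-1)^⌊j·ξ⌋`. -/
noncomputable def S (ξ : ℝ) (n : ℕ) : ℤ :=
  ∑ j ∈ Finset.Icc 1 n, ((Int.negOnePow ⌊(j : ℝ) * ξ⌋ : ℤˣ) : ℤ)

/-- The Gauss-map iteration: `gauss ξ 0 = ξ` and `gauss ξ (n+1) = {1 / gauss ξ n}`. -/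
noncomputable def gauss (ξ : ℝ) : ℕ → ℝ
  | 0 => ξ
  | n + 1 => Int.fract (1 / gauss ξ n)

/-- For irrational `ξ ∈ (0,1)`, `cfA ξ n` (for `n ≥ 1`) is the `n`-th partial quotient
`a_n` of the continued fraction expansion `ξ = [0; a₁, a₂, a₃, …]`. -/
noncomputable def cfA (ξ : ℝ) (n : ℕ) : ℕ :=
  (⌊1 / gauss ξ (n - 1)⌋).toNat

/-- The denominators of the convergents of `ξ`:
`q₀ = 1`, `q₁ = a₁`, and `q_{n+1} = a_{n+1}·q_n + q_{n-1}`. -/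
noncomputable def cfQ (ξ : ℝ) : ℕ → ℕ
  | 0 => 1
  | 1 => cfA ξ 1
  | n + 2 => cfA ξ (n + 2) * cfQ ξ (n + 1) + cfQ ξ n

/-- `ξ` is a BR-number if all its odd-indexed partial quotients `a₁, a₃, a₅, …` are even. -/
def IsBR (ξ : ℝ) : Prop := ∀ n : ℕ, Even (cfA ξ (2 * n + 1))

namespace BRW

/-- numerators -/
noncomputable def cfP (ξ : ℝ) : ℕ → ℕ
  | 0 => 0
  | 1 => 1
  | n + 2 => cfA ξ (n + 2) * cfP ξ (n + 1) + cfP ξ n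

/-- `EE ξ n = |q_n ξ - p_n| = ∏_{i ≤ n} gauss ξ i` -/
noncomputable def EE (ξ : ℝ) (n : ℕ) : ℝ := ∏ i ∈ Finset.range (n + 1), gauss ξ i

section Basic

variable (ξ : ℝ) (hξ : ξ ∈ Set.Ioo (0:ℝ) 1) (hirr : Irrational ξ)

include hξ hirr in
lemma gauss_basic : ∀ n, gauss ξ n ∈ Set.Ioo (0:ℝ) 1 ∧ Irrational (gauss ξ n) := by
  intro n
  induction n with
  | zero => exact ⟨hξ, hirr⟩
  | succ n ih =>
    obtain ⟨⟨h0, h1⟩, hi⟩ := ih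
    have hinv : Irrational (1 / gauss ξ n) := by
      rw [one_div]; exact hi.inv
    have hfr : Irrational (Int.fract (1 / gauss ξ n)) := by
      unfold Int.fract
      exact hinv.sub_intCast _
    constructor
    · constructor
      · show (0:ℝ) < Int.fract _
        rcases lt_or_eq_of_le (Int.fract_nonneg (1 / gauss ξ n)) with h | h
        · exact h
        · exfalso
          have hz : Irrational (0:ℝ) := h ▸ hfr
          exact hz ⟨0, by norm_num⟩
      · exact Int.fract_lt_one _
    · exact hfr

include hξ hirr in
lemma gauss_pos (n : ℕ) : 0 < gauss ξ n := (gauss_basic ξ hξ hirr n).1.1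

include hξ hirr in
lemma gauss_lt_one (n : ℕ) : gauss ξ n < 1 := (gauss_basic ξ hξ hirr n).1.2

include hξ hirr in
lemma gauss_irr (n : ℕ) : Irrational (gauss ξ n) := (gauss_basic ξ hξ hirr n).2

include hξ hirr in
lemma cfA_ge_one (n : ℕ) : 1 ≤ cfA ξ (n + 1) := by
  have h0 := gauss_pos ξ hξ hirr n
  have h1 := gauss_lt_one ξ hξ hirr n
  have : (1:ℝ) < 1 / gauss ξ n := by rw [lt_div_iff₀ h0]; linarith

  unfold cfA
  simp only [Nat.add_sub_cancel]
  have : (1:ℤ) ≤ ⌊1 / gauss ξ n⌋ := by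
    exact_mod_cast Int.le_floor.2 (by exact_mod_cast this.le)
  omega

include hξ hirr in
/-- the fundamental relation `1 / x_n = a_{n+1} + x_{n+1}` -/
lemma gauss_rec (n : ℕ) : 1 / gauss ξ n = (cfA ξ (n + 1) : ℝ) + gauss ξ (n + 1) := by
  have h0 := gauss_pos ξ hξ hirr n
  have h1 := gauss_lt_one ξ hξ hirr n
  have hfl : (0:ℤ) ≤ ⌊1 / gauss ξ n⌋ := by
    apply Int.floor_nonneg.2
    positivity
  have : (cfA ξ (n+1) : ℝ) = (⌊1 / gauss ξ n⌋ : ℝ) := by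
    unfold cfA
    simp only [Nat.add_sub_cancel]
    exact_mod_cast congrArg (fun z : ℤ => (z : ℝ)) (Int.toNat_of_nonneg hfl)
  rw [this]
  show _ = _ + Int.fract (1 / gauss ξ n)
  rw [Int.fract]
  ring

end Basic

end BRW

namespace BRW

section CF

variable (ξ : ℝ) (hξ : ξ ∈ Set.Ioo (0:ℝ) 1) (hirr : Irrational ξ) (hBR : IsBR ξ)

lemma EE_zero : EE ξ 0 = ξ := by simp [EE, gauss]

lemma EE_succ (n : ℕ) : EE ξ (n + 1) = EE ξ n * gauss ξ (n + 1) := by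
  unfold EE
  rw [Finset.prod_range_succ]

include hξ hirr in
lemma EE_pos (n : ℕ) : 0 < EE ξ n := by
  unfold EE
  exact Finset.prod_pos fun i _ => gauss_pos ξ hξ hirr i

include hξ hirr in
lemma EE_lt_one (n : ℕ) : EE ξ n < 1 := by
  induction n with
  | zero => rw [EE_zero]; exact hξ.2
  | succ n ih =>
    rw [EE_succ]
    calc EE ξ n * gauss ξ (n+1) < 1 * 1 := by
          apply mul_lt_mul'' ih (gauss_lt_one ξ hξ hirr (n+1)) (EE_pos ξ hξ hirr n).le
            (gauss_pos ξ hξ hirr (n+1)).le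
      _ = 1 := by ring

include hξ hirr in
lemma EE_strict_anti (n : ℕ) : EE ξ (n + 1) < EE ξ n := by
  rw [EE_succ]
  nth_rewrite 2 [show EE ξ n = EE ξ n * 1 by ring]
  exact mul_lt_mul_of_pos_left (gauss_lt_one ξ hξ hirr (n+1)) (EE_pos ξ hξ hirr n)

include hξ hirr in
lemma EE_rec (n : ℕ) : EE ξ n = (cfA ξ (n + 2) : ℝ) * EE ξ (n + 1) + EE ξ (n + 2) := by
  have h1 : EE ξ (n + 1) * (1 / gauss ξ (n+1)) = EE ξ n := by
    rw [EE_succ, mul_assoc, mul_one_div, div_self (ne_of_gt (gauss_pos ξ hξ hirr (n+1))), mul_one]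
  rw [gauss_rec ξ hξ hirr (n+1)] at h1
  rw [← h1, EE_succ ξ (n+1)]
  ring

lemma cfQ_step (n : ℕ) : cfQ ξ (n + 2) = cfA ξ (n + 2) * cfQ ξ (n + 1) + cfQ ξ n := by
  rfl

lemma cfP_step (n : ℕ) : cfP ξ (n + 2) = cfA ξ (n + 2) * cfP ξ (n + 1) + cfP ξ n := by
  rfl

include hξ hirr in
lemma cfQ_pos (n : ℕ) : 1 ≤ cfQ ξ n := by
  induction n using Nat.twoStepInduction with
  | zero => exact le_refl 1
  | one => exact cfA_ge_one ξ hξ hirr 0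
  | more n ih1 ih2 =>
    rw [cfQ_step]
    have := cfA_ge_one ξ hξ hirr (n+1)
    nlinarith

include hξ hirr in
lemma cfQ_lt_succ (n : ℕ) : 1 ≤ n → cfQ ξ n < cfQ ξ (n + 1) := by
  intro hn
  obtain ⟨k, rfl⟩ := Nat.exists_eq_add_of_le hn
  rw [show 1 + k = k + 1 by ring, show k + 1 + 1 = k + 2 by ring]
  rw [cfQ_step]
  have h1 := cfA_ge_one ξ hξ hirr (k+1)
  have h2 := cfQ_pos ξ hξ hirr (k + 1)
  have h3 := cfQ_pos ξ hξ hirr k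
  nlinarith

include hξ hirr in
lemma cfQ_le_succ (n : ℕ) : cfQ ξ n ≤ cfQ ξ (n + 1) := by
  rcases Nat.eq_zero_or_pos n with h | h
  · subst h
    show cfQ ξ 0 ≤ cfQ ξ 1
    exact cfA_ge_one ξ hξ hirr 0
  · exact (cfQ_lt_succ ξ hξ hirr n h).le

include hξ hirr in
lemma Dval (n : ℕ) : (cfQ ξ n : ℝ) * ξ - cfP ξ n = (-1 : ℝ)^n * EE ξ n := by
  induction n using Nat.twoStepInduction with
  | zero => simp [cfQ, cfP, EE_zero]
  | one =>
    have hq1 : cfQ ξ 1 = cfA ξ 1 := rfl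
    have hp1 : cfP ξ 1 = 1 := rfl
    rw [hq1, hp1]
    have h := gauss_rec ξ hξ hirr 0
    have hx0 : gauss ξ 0 = ξ := rfl
    rw [hx0] at h
    have hpos : (0:ℝ) < ξ := hξ.1
    have h2 : 1 = (cfA ξ 1 : ℝ) * ξ + gauss ξ 1 * ξ := by
      have := congrArg (fun t => t * ξ) h
      rw [one_div, inv_mul_cancel₀ (ne_of_gt hpos)] at this
      rw [this]; ring
    rw [EE_succ, EE_zero]
    push_cast
    nlinarith [h2]
  | more n ih1 ih2 =>
    rw [cfQ_step, cfP_step]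
    push_cast
    have hrec := EE_rec ξ hξ hirr n
    calc (↑(cfA ξ (n+2)) * ↑(cfQ ξ (n+1)) + ↑(cfQ ξ n)) * ξ -
          (↑(cfA ξ (n+2)) * ↑(cfP ξ (n+1)) + ↑(cfP ξ n))
        = (cfA ξ (n+2) : ℝ) * ((cfQ ξ (n+1) : ℝ) * ξ - cfP ξ (n+1)) +
          ((cfQ ξ n : ℝ) * ξ - cfP ξ n) := by ring
      _ = (cfA ξ (n+2) : ℝ) * ((-1:ℝ)^(n+1) * EE ξ (n+1)) + (-1:ℝ)^n * EE ξ n := by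
          rw [ih1, ih2]
      _ = (-1:ℝ)^n * (EE ξ n - (cfA ξ (n+2) : ℝ) * EE ξ (n+1)) := by ring
      _ = (-1:ℝ)^(n+2) * EE ξ (n+2) := by rw [hrec]; ring

lemma det_id (n : ℕ) : (cfP ξ (n+1) : ℤ) * cfQ ξ n - (cfP ξ n : ℤ) * cfQ ξ (n+1) = (-1)^n := by
  induction n with
  | zero => simp [cfP, cfQ]
  | succ n ih =>
    rw [cfQ_step, cfP_step]
    push_cast
    push_cast at ih
    have : (-1 : ℤ)^(n+1) = -(-1:ℤ)^n := by ring
    rw [this]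
    nlinarith [ih]

end CF

end BRW
namespace BRW

section BA

variable (ξ : ℝ) (hξ : ξ ∈ Set.Ioo (0:ℝ) 1) (hirr : Irrational ξ) (hBR : IsBR ξ)

include hξ hirr hBR in
lemma a_odd_two_le (m : ℕ) : 2 ≤ cfA ξ (2*m+1) := by
  have h1 := cfA_ge_one ξ hξ hirr (2*m)
  have h2 := hBR m
  rcases h2 with ⟨k, hk⟩
  omega

include hξ hirr hBR in
lemma q_odd_even (m : ℕ) : Even (cfQ ξ (2*m+1)) := by
  induction m with
  | zero =>
    show Even (cfQ ξ 1)
    have : cfQ ξ 1 = cfA ξ 1 := rfl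
    rw [this]
    exact hBR 0
  | succ m ih =>
    have hstep : cfQ ξ (2*(m+1)+1) = cfA ξ (2*m+1+2) * cfQ ξ (2*m+1+1) + cfQ ξ (2*m+1) := by
      have : 2*(m+1)+1 = (2*m+1) + 2 := by ring
      rw [this, cfQ_step]
    rw [hstep]
    have ha : Even (cfA ξ (2*m+1+2)) := by
      have : 2*m+1+2 = 2*(m+1)+1 := by ring
      rw [this]; exact hBR (m+1)
    exact (ha.mul_right _).add ih

lemma p_odd_odd (hBR : IsBR ξ) : ∀ m, Odd (cfP ξ (2*m+1)) := by
  intro m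
  induction m with
  | zero => exact ⟨0, rfl⟩
  | succ m ih =>
    have hstep : cfP ξ (2*(m+1)+1) = cfA ξ (2*m+1+2) * cfP ξ (2*m+1+1) + cfP ξ (2*m+1) := by
      have : 2*(m+1)+1 = (2*m+1) + 2 := by ring
      rw [this, cfP_step]
    rw [hstep]
    have ha : Even (cfA ξ (2*m+1+2)) := by
      have : 2*m+1+2 = 2*(m+1)+1 := by ring
      rw [this]; exact hBR (m+1)
    rcases ha.mul_right (cfP ξ (2*m+1+1)) with ⟨k, hk⟩
    rcases ih with ⟨l, hl⟩
    exact ⟨k + l, by omega⟩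

include hξ hirr in
/-- Best approximation: for `1 ≤ r < q_{k+1}` and any integer `s`, `|rξ - s| ≥ E_k`. -/
lemma BA (k : ℕ) (r : ℕ) (hr : 1 ≤ r) (hrq : r < cfQ ξ (k+1)) (s : ℤ) :
    EE ξ k ≤ |(r:ℝ) * ξ - s| := by
  set e : ℤ := (-1)^k with he_def
  have he : e * e = 1 := by
    rw [he_def, ← pow_add]
    have : Even (k + k) := ⟨k, rfl⟩
    exact Even.neg_one_pow this
  have det := det_id ξ k
  set u : ℤ := e * ((r:ℤ) * cfP ξ (k+1) - s * cfQ ξ (k+1)) with hu_def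
  set v : ℤ := e * (s * cfQ ξ k - (r:ℤ) * cfP ξ k) with hv_def
  have hru : (r:ℤ) = u * cfQ ξ k + v * cfQ ξ (k+1) := by
    rw [hu_def, hv_def]
    linear_combination (-e * (r:ℤ)) * det + (-(r:ℤ)) * he
  have hsu : s = u * cfP ξ k + v * cfP ξ (k+1) := by
    rw [hu_def, hv_def]
    linear_combination (-e * s) * det + (-s) * he
  have hreal : (r:ℝ) * ξ - s = (e:ℝ) * ((u:ℝ) * EE ξ k - (v:ℝ) * EE ξ (k+1)) := by
    have Dk := Dval ξ hξ hirr k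
    have Dk1 := Dval ξ hξ hirr (k+1)
    have hrr : (r:ℝ) = (u:ℝ) * cfQ ξ k + (v:ℝ) * cfQ ξ (k+1) := by exact_mod_cast hru
    have hss : (s:ℝ) = (u:ℝ) * cfP ξ k + (v:ℝ) * cfP ξ (k+1) := by exact_mod_cast hsu
    have hee : ((e:ℤ):ℝ) = (-1:ℝ)^k := by rw [he_def]; push_cast; ring
    calc (r:ℝ) * ξ - s
        = (u:ℝ) * ((cfQ ξ k : ℝ) * ξ - cfP ξ k)
          + (v:ℝ) * ((cfQ ξ (k+1) : ℝ) * ξ - cfP ξ (k+1)) := by rw [hrr, hss]; ring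
      _ = (u:ℝ) * ((-1:ℝ)^k * EE ξ k) + (v:ℝ) * ((-1:ℝ)^(k+1) * EE ξ (k+1)) := by
          rw [Dk, Dk1]
      _ = (e:ℝ) * ((u:ℝ) * EE ξ k - (v:ℝ) * EE ξ (k+1)) := by rw [hee]; ring
  have habs : |(r:ℝ) * ξ - s| = |(u:ℝ) * EE ξ k - (v:ℝ) * EE ξ (k+1)| := by
    rw [hreal, abs_mul]
    have : |(e:ℝ)| = 1 := by
      rw [he_def]; push_cast; rw [abs_pow, abs_neg, abs_one, one_pow]
    rw [this, one_mul]
  rw [habs]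
  have hEk := EE_pos ξ hξ hirr k
  have hEk1 := EE_pos ξ hξ hirr (k+1)
  have hqk : (1:ℤ) ≤ cfQ ξ k := by exact_mod_cast cfQ_pos ξ hξ hirr k
  have hqk1 : (1:ℤ) ≤ cfQ ξ (k+1) := by exact_mod_cast cfQ_pos ξ hξ hirr (k+1)
  have hrq' : (r:ℤ) < cfQ ξ (k+1) := by exact_mod_cast hrq
  have hr' : (1:ℤ) ≤ (r:ℤ) := by exact_mod_cast hr
  rcases lt_trichotomy u 0 with hu | hu | hu
  · rcases lt_trichotomy v 0 with hv | hv | hv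
    · exfalso
      have : (r:ℤ) ≤ -1 * cfQ ξ k + -1 * cfQ ξ (k+1) := by
        rw [hru]
        have h1 : u * cfQ ξ k ≤ -1 * cfQ ξ k := by
          apply mul_le_mul_of_nonneg_right _ (by linarith)
          omega
        have h2 : v * cfQ ξ (k+1) ≤ -1 * cfQ ξ (k+1) := by
          apply mul_le_mul_of_nonneg_right _ (by linarith)
          omega
        linarith
      linarith
    · exfalso
      rw [hv, zero_mul, add_zero] at hru
      have : u * cfQ ξ k ≤ -1 * cfQ ξ k := by
        apply mul_le_mul_of_nonneg_right _ (by linarith)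
        omega
      linarith
    · -- u < 0 < v : value = -( |u| E_k + v E_{k+1} )
      have hu1 : (u:ℝ) ≤ -1 := by exact_mod_cast (by omega : u ≤ -1)
      have hv1 : (1:ℝ) ≤ (v:ℝ) := by exact_mod_cast (by omega : 1 ≤ v)
      have : (u:ℝ) * EE ξ k - (v:ℝ) * EE ξ (k+1) ≤ -EE ξ k := by nlinarith
      calc EE ξ k ≤ -((u:ℝ) * EE ξ k - (v:ℝ) * EE ξ (k+1)) := by linarith
        _ ≤ |(u:ℝ) * EE ξ k - (v:ℝ) * EE ξ (k+1)| := neg_le_abs _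
  · -- u = 0
    exfalso
    rw [hu, zero_mul, zero_add] at hru
    rcases lt_trichotomy v 0 with hv | hv | hv
    · have : v * cfQ ξ (k+1) ≤ -1 * cfQ ξ (k+1) := by
        apply mul_le_mul_of_nonneg_right _ (by linarith)
        omega
      linarith
    · rw [hv, zero_mul] at hru; linarith
    · have : 1 * cfQ ξ (k+1) ≤ v * cfQ ξ (k+1) := by
        apply mul_le_mul_of_nonneg_right _ (by linarith)
        omega
      linarith
  · rcases lt_trichotomy v 0 with hv | hv | hv
    · -- u > 0 > v
      have hu1 : (1:ℝ) ≤ (u:ℝ) := by exact_mod_cast (by omega : 1 ≤ u)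
      have hv1 : (v:ℝ) ≤ -1 := by exact_mod_cast (by omega : v ≤ -1)
      have : EE ξ k ≤ (u:ℝ) * EE ξ k - (v:ℝ) * EE ξ (k+1) := by nlinarith
      calc EE ξ k ≤ (u:ℝ) * EE ξ k - (v:ℝ) * EE ξ (k+1) := this
        _ ≤ |(u:ℝ) * EE ξ k - (v:ℝ) * EE ξ (k+1)| := le_abs_self _
    · -- v = 0
      have hu1 : (1:ℝ) ≤ (u:ℝ) := by exact_mod_cast (by omega : 1 ≤ u)
      rw [hv]
      push_cast
      rw [zero_mul, sub_zero]
      calc EE ξ k ≤ (u:ℝ) * EE ξ k := by nlinarith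
        _ ≤ |(u:ℝ) * EE ξ k| := le_abs_self _
    · -- u > 0, v > 0
      exfalso
      have h1 : 1 * cfQ ξ k ≤ u * cfQ ξ k := by
        apply mul_le_mul_of_nonneg_right _ (by linarith)
        omega
      have h2 : 1 * cfQ ξ (k+1) ≤ v * cfQ ξ (k+1) := by
        apply mul_le_mul_of_nonneg_right _ (by linarith)
        omega
      linarith

end BA

end BRW
namespace BRW

/-- half of odd-index denominator -/
noncomputable def Qh (ξ : ℝ) (μ : ℕ) : ℕ := cfQ ξ (2*μ+1) / 2

section Fracts

variable (ξ : ℝ) (hξ : ξ ∈ Set.Ioo (0:ℝ) 1) (hirr : Irrational ξ) (hBR : IsBR ξ)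

include hξ hirr in
lemma EE_le_of_le {m n : ℕ} (h : m ≤ n) : EE ξ n ≤ EE ξ m := by
  induction n with
  | zero => simp_all
  | succ n ih =>
    rcases Nat.lt_or_ge m (n+1) with h' | h'
    · exact le_trans (EE_strict_anti ξ hξ hirr n).le (ih (by omega))
    · have : m = n + 1 := by omega
      subst this; rfl

include hirr in
lemma irr_nat_mul {j : ℕ} (hj : j ≠ 0) : Irrational ((j:ℝ) * ξ) := by
  have := hirr.natCast_mul (m := j) hj
  exact this

include hirr in
lemma fract_nat_mul_pos {j : ℕ} (hj : j ≠ 0) : 0 < Int.fract ((j:ℝ) * ξ) := by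
  rcases lt_or_eq_of_le (Int.fract_nonneg ((j:ℝ) * ξ)) with h | h
  · exact h
  · exfalso
    have h2 : Irrational (Int.fract ((j:ℝ)*ξ)) := by
      unfold Int.fract
      exact (irr_nat_mul ξ hirr hj).sub_intCast _
    rw [← h] at h2
    exact h2 ⟨0, by norm_num⟩

include hirr in
lemma sum_fract_ne_one {r s : ℕ} (hrs : r + s ≠ 0) :
    Int.fract ((r:ℝ) * ξ) + Int.fract ((s:ℝ) * ξ) ≠ 1 := by
  intro h
  have hr : (r:ℝ)*ξ = ⌊(r:ℝ)*ξ⌋ + Int.fract ((r:ℝ)*ξ) := by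
    rw [Int.fract]; ring
  have hs : (s:ℝ)*ξ = ⌊(s:ℝ)*ξ⌋ + Int.fract ((s:ℝ)*ξ) := by
    rw [Int.fract]; ring
  have : ((r+s : ℕ):ℝ) * ξ = ((⌊(r:ℝ)*ξ⌋ + ⌊(s:ℝ)*ξ⌋ + 1 : ℤ) : ℝ) := by
    push_cast
    nlinarith [hr, hs, h]
  exact (irr_nat_mul ξ hirr hrs) ⟨((⌊(r:ℝ)*ξ⌋ + ⌊(s:ℝ)*ξ⌋ + 1 : ℤ) : ℚ), by
    rw [this]; norm_cast⟩

include hirr in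
lemma fract_ne_fract {r s : ℕ} (hrs : r ≠ s) :
    Int.fract ((r:ℝ) * ξ) ≠ Int.fract ((s:ℝ) * ξ) := by
  intro h
  rcases Int.fract_eq_fract.1 h with ⟨z, hz⟩
  have : ((r:ℝ) - (s:ℝ)) * ξ = (z:ℝ) := by nlinarith [hz]
  rcases Nat.lt_or_ge r s with hlt | hge
  · have hne : ((s - r : ℕ) : ℝ) * ξ = ((-z : ℤ):ℝ) := by
      push_cast [Nat.cast_sub hlt.le] at this ⊢
      nlinarith [this]
    exact (irr_nat_mul ξ hirr (by omega : s - r ≠ 0)) ⟨((-z : ℤ):ℚ), by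
      rw [hne]; push_cast; ring⟩
  · have hlt' : s < r := by omega
    have hne : ((r - s : ℕ) : ℝ) * ξ = ((z : ℤ):ℝ) := by
      push_cast [Nat.cast_sub hlt'.le] at this ⊢
      nlinarith [this]
    exact (irr_nat_mul ξ hirr (by omega : r - s ≠ 0)) ⟨((z : ℤ):ℚ), by
      rw [hne]; push_cast; ring⟩

include hξ hirr in
/-- lower bound for fractional parts: `E_k ≤ {rξ}` for `1 ≤ r < q_{k+1}` -/
lemma BA_fract_lower (k : ℕ) (r : ℕ) (hr : 1 ≤ r) (hrq : r < cfQ ξ (k+1)) :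
    EE ξ k ≤ Int.fract ((r:ℝ) * ξ) := by
  have := BA ξ hξ hirr k r hr hrq ⌊(r:ℝ)*ξ⌋
  rwa [abs_of_nonneg (by exact Int.fract_nonneg _ : (0:ℝ) ≤ (r:ℝ)*ξ - ⌊(r:ℝ)*ξ⌋)] at this

include hξ hirr in
/-- upper bound: `{rξ} ≤ 1 - E_k` for `1 ≤ r < q_{k+1}` -/
lemma BA_fract_upper (k : ℕ) (r : ℕ) (hr : 1 ≤ r) (hrq : r < cfQ ξ (k+1)) :
    Int.fract ((r:ℝ) * ξ) ≤ 1 - EE ξ k := by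
  have := BA ξ hξ hirr k r hr hrq (⌊(r:ℝ)*ξ⌋ + 1)
  have h2 : |(r:ℝ)*ξ - (⌊(r:ℝ)*ξ⌋ + 1 : ℤ)| = 1 - Int.fract ((r:ℝ)*ξ) := by
    rw [abs_of_nonpos]
    · push_cast; rw [Int.fract]; ring
    · push_cast
      have := Int.fract_lt_one ((r:ℝ)*ξ)
      rw [Int.fract] at this
      linarith
  rw [h2] at this
  linarith

include hξ hirr in
lemma fract_q_even (k : ℕ) : Int.fract ((cfQ ξ (2*k) : ℝ) * ξ) = EE ξ (2*k) := by
  have hd := Dval ξ hξ hirr (2*k)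
  have hsgn : (-1:ℝ)^(2*k) = 1 := by
    rw [pow_mul]; norm_num
  rw [hsgn, one_mul] at hd
  have : (cfQ ξ (2*k) : ℝ) * ξ = ((cfP ξ (2*k) : ℤ) : ℝ) + EE ξ (2*k) := by
    push_cast; linarith
  rw [this, Int.fract_intCast_add, Int.fract_eq_self.2
    ⟨(EE_pos ξ hξ hirr _).le, EE_lt_one ξ hξ hirr _⟩]

include hξ hirr in
lemma fract_q_odd (k : ℕ) : Int.fract ((cfQ ξ (2*k+1) : ℝ) * ξ) = 1 - EE ξ (2*k+1) := by
  have hd := Dval ξ hξ hirr (2*k+1)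
  have hsgn : (-1:ℝ)^(2*k+1) = -1 := by
    rw [pow_succ, pow_mul]; norm_num
  rw [hsgn] at hd
  have : (cfQ ξ (2*k+1) : ℝ) * ξ = ((cfP ξ (2*k+1) : ℤ) - 1 : ℤ) + (1 - EE ξ (2*k+1)) := by
    push_cast; linarith
  rw [this, Int.fract_intCast_add, Int.fract_eq_self.2
    ⟨by linarith [EE_lt_one ξ hξ hirr (2*k+1)], by linarith [EE_pos ξ hξ hirr (2*k+1)]⟩]

include hξ hirr hBR in
lemma Qh_two (μ : ℕ) : 2 * Qh ξ μ = cfQ ξ (2*μ+1) := by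
  rcases q_odd_even ξ hξ hirr hBR μ with ⟨k, hk⟩
  unfold Qh
  omega

include hξ hirr hBR in
lemma Qh_pos (μ : ℕ) : 1 ≤ Qh ξ μ := by
  have h2 := Qh_two ξ hξ hirr hBR μ
  have := cfQ_pos ξ hξ hirr (2*μ+1)
  rcases q_odd_even ξ hξ hirr hBR μ with ⟨k, hk⟩
  omega

include hξ hirr hBR in
lemma Qh_lt (μ : ℕ) : Qh ξ μ < cfQ ξ (2*μ+1) := by
  have h2 := Qh_two ξ hξ hirr hBR μ
  have h1 := Qh_pos ξ hξ hirr hBR μ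
  omega

include hξ hirr hBR in
/-- `{Qh_μ ξ} = (1 - E_{2μ+1})/2` -/
lemma fract_Qh (μ : ℕ) : Int.fract ((Qh ξ μ : ℝ) * ξ) = (1 - EE ξ (2*μ+1)) / 2 := by
  have hd := Dval ξ hξ hirr (2*μ+1)
  have hsgn : (-1:ℝ)^(2*μ+1) = -1 := by
    rw [pow_succ, pow_mul]; norm_num
  rw [hsgn] at hd
  have hp : Odd (cfP ξ (2*μ+1)) := p_odd_odd ξ hBR μ
  rcases hp with ⟨l, hl⟩
  have h2 : (2 * Qh ξ μ : ℝ) = (cfQ ξ (2*μ+1) : ℝ) := by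
    exact_mod_cast congrArg (fun n : ℕ => (n:ℝ)) (Qh_two ξ hξ hirr hBR μ)
  have : (Qh ξ μ : ℝ) * ξ = ((l : ℤ) : ℝ) + (1 - EE ξ (2*μ+1)) / 2 := by
    have hql : (cfQ ξ (2*μ+1) : ℝ) * ξ = (cfP ξ (2*μ+1) : ℝ) - EE ξ (2*μ+1) := by linarith
    have hpl : (cfP ξ (2*μ+1) : ℝ) = 2*(l:ℝ) + 1 := by exact_mod_cast congrArg (fun n : ℕ => (n:ℝ)) hl
    push_cast
    linear_combination (ξ/2) * h2 + (1/2) * hql + (1/2) * hpl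
  rw [this, Int.fract_intCast_add, Int.fract_eq_self.2 ⟨by linarith [EE_lt_one ξ hξ hirr (2*μ+1)],
    by linarith [EE_pos ξ hξ hirr (2*μ+1)]⟩]

lemma fract_two_mul (x : ℝ) : Int.fract (2*x) =
    if Int.fract x < 1/2 then 2 * Int.fract x else 2 * Int.fract x - 1 := by
  have hx : 2*x = (2*⌊x⌋ : ℤ) + 2 * Int.fract x := by
    rw [Int.fract]; push_cast; ring
  rw [hx, Int.fract_intCast_add]
  rcases lt_or_ge (Int.fract x) (1/2) with h | h
  · rw [if_pos h, Int.fract_eq_self.2 ⟨by linarith [Int.fract_nonneg x], by linarith⟩]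
  · rw [if_neg (by linarith), show (2 : ℝ) * Int.fract x = (1:ℤ) + (2*Int.fract x - 1) by push_cast; ring,
      Int.fract_intCast_add, Int.fract_eq_self.2 ⟨by linarith, by linarith [Int.fract_lt_one x]⟩]
    push_cast; ring

end Fracts

end BRW
namespace BRW

section Lplus

variable (ξ : ℝ) (hξ : ξ ∈ Set.Ioo (0:ℝ) 1) (hirr : Irrational ξ) (hBR : IsBR ξ)

include hξ hirr in
lemma fract_q_even' (μ : ℕ) : Int.fract ((cfQ ξ (2*μ+2) : ℝ) * ξ) = EE ξ (2*μ+2) := by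
  have h := fract_q_even ξ hξ hirr (μ+1)
  have e : 2*(μ+1) = 2*μ+2 := by ring
  rwa [e] at h

include hξ hirr in
lemma fract_q_odd' (μ : ℕ) : Int.fract ((cfQ ξ (2*μ+3) : ℝ) * ξ) = 1 - EE ξ (2*μ+3) := by
  have h := fract_q_odd ξ hξ hirr (μ+1)
  have e : 2*(μ+1)+1 = 2*μ+3 := by ring
  rwa [e] at h

include hξ hirr hBR in
lemma a_odd_two_le' (μ : ℕ) : 2 ≤ cfA ξ (2*μ+3) := by
  have h := a_odd_two_le ξ hξ hirr hBR (μ+1)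
  have e : 2*(μ+1)+1 = 2*μ+3 := by ring
  rwa [e] at h

include hξ hirr hBR in
lemma Qh_rec (μ : ℕ) : 2 * Qh ξ (μ+1) = cfA ξ (2*μ+3) * cfQ ξ (2*μ+2) + 2 * Qh ξ μ := by
  have h1 := Qh_two ξ hξ hirr hBR (μ+1)
  have h0 := Qh_two ξ hξ hirr hBR μ
  have e : 2*(μ+1)+1 = (2*μ+1) + 2 := by ring
  rw [e] at h1
  rw [cfQ_step] at h1
  have e2 : 2*μ+1+1 = 2*μ+2 := by ring
  have e3 : 2*μ+1+2 = 2*μ+3 := by ring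
  rw [e2, e3] at h1
  omega

include hξ hirr in
/-- classification of positive-side close returns at even levels -/
lemma Lplus (μ : ℕ) : ∀ r : ℕ, 1 ≤ r → r < cfQ ξ (2*μ+3) →
    Int.fract ((r:ℝ)*ξ) < EE ξ (2*μ+1) →
    ∃ t : ℕ, 1 ≤ t ∧ t ≤ cfA ξ (2*μ+3) ∧ r = t * cfQ ξ (2*μ+2) ∧
      Int.fract ((r:ℝ)*ξ) = t * EE ξ (2*μ+2) := by
  intro r
  induction r using Nat.strong_induction_on with
  | _ r IH =>
  intro hr hrq hfr
  rcases lt_trichotomy r (cfQ ξ (2*μ+2)) with hlt | heq | hgt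
  · exfalso
    have hlow := BA_fract_lower ξ hξ hirr (2*μ+1) r hr (by
      have e : 2*μ+1+1 = 2*μ+2 := by ring
      rw [e]; exact hlt)
    linarith
  · refine ⟨1, le_refl 1, cfA_ge_one ξ hξ hirr (2*μ+2), by omega, ?_⟩
    rw [heq, fract_q_even' ξ hξ hirr μ]
    push_cast; ring
  · -- r > q_{2μ+2} : subtract and recurse
    set q2 := cfQ ξ (2*μ+2) with hq2
    have hq2pos : 1 ≤ q2 := cfQ_pos ξ hξ hirr _
    set r' := r - q2 with hr'
    have hr'1 : 1 ≤ r' := by omega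
    have hr'lt : r' < r := by omega
    have hr'q : r' < cfQ ξ (2*μ+3) := by omega
    -- fract (r' ξ) = fract (r ξ) - E₂
    have hfrl : EE ξ (2*μ+2) ≤ Int.fract ((r:ℝ)*ξ) := by
      have := BA_fract_lower ξ hξ hirr (2*μ+2) r hr (by
        have e : 2*μ+2+1 = 2*μ+3 := by ring
        rw [e]; exact hrq)
      exact this
    have hfrs : EE ξ (2*μ+2) < Int.fract ((r:ℝ)*ξ) := by
      rcases lt_or_eq_of_le hfrl with h | h
      · exact h
      · exfalso
        have := fract_ne_fract ξ hirr (r := r) (s := q2) (by omega)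
        rw [fract_q_even' ξ hξ hirr μ] at this
        exact this h.symm
    have key : Int.fract ((r':ℝ)*ξ) = Int.fract ((r:ℝ)*ξ) - EE ξ (2*μ+2) := by
      have hqe := fract_q_even' ξ hξ hirr μ
      have hsub : ((r':ℕ):ℝ)*ξ - (Int.fract ((r:ℝ)*ξ) - EE ξ (2*μ+2)) =
          ((⌊(r:ℝ)*ξ⌋ - cfP ξ (2*μ+2) : ℤ) : ℝ) := by
        have hcast : ((r':ℕ):ℝ) = (r:ℝ) - (q2:ℝ) := by
          rw [hr', Nat.cast_sub (by omega : q2 ≤ r)]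
        have hD := Dval ξ hξ hirr (2*μ+2)
        have hsgn : (-1:ℝ)^(2*μ+2) = 1 := by
          have : 2*μ+2 = 2*(μ+1) := by ring
          rw [this, pow_mul]; norm_num
        rw [hsgn, one_mul] at hD
        rw [hcast]
        rw [Int.fract]
        push_cast
        linarith [hD]
      have := Int.fract_eq_fract.2 ⟨_, hsub⟩
      rw [this, Int.fract_eq_self.2 ⟨by linarith,
        by linarith [Int.fract_lt_one ((r:ℝ)*ξ), EE_pos ξ hξ hirr (2*μ+2)]⟩]
    have hfr' : Int.fract ((r':ℝ)*ξ) < EE ξ (2*μ+1) := by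
      rw [key]
      have := EE_pos ξ hξ hirr (2*μ+2)
      linarith
    obtain ⟨t, ht1, hta, htr, htf⟩ := IH r' hr'lt hr'1 hr'q hfr'
    refine ⟨t+1, by omega, ?_, by rw [Nat.succ_mul]; omega, ?_⟩
    · -- bound : (t+1) ≤ a
      by_contra hcon
      push_neg at hcon
      have hle : cfA ξ (2*μ+3) ≤ t := by omega
      have hrr : r = t*q2 + q2 := by omega
      have h1 : cfA ξ (2*μ+3) * q2 + q2 ≤ r := by
        rw [hrr]
        have := Nat.mul_le_mul_right q2 hle
        omega
      have h2 : cfQ ξ (2*μ+3) = cfA ξ (2*μ+3) * q2 + cfQ ξ (2*μ+1) := by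
        have e : 2*μ+3 = (2*μ+1)+2 := by ring
        rw [e, cfQ_step]
      have h3 : cfQ ξ (2*μ+1) ≤ q2 := by
        have := cfQ_le_succ ξ hξ hirr (2*μ+1)
        have e2 : 2*μ+1+1 = 2*μ+2 := by ring
        rwa [e2] at this
      omega
    · push_cast
      push_cast at htf
      linarith [key, htf]

end Lplus

end BRW
namespace BRW

section Windows

variable (ξ : ℝ) (hξ : ξ ∈ Set.Ioo (0:ℝ) 1) (hirr : Irrational ξ) (hBR : IsBR ξ)

lemma floor_sub_pos_small {w d : ℝ} (hd : 0 < d) (h : d < Int.fract w) : ⌊w - d⌋ = ⌊w⌋ := by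
  apply Int.floor_eq_iff.2
  constructor
  · have : Int.fract w = w - ⌊w⌋ := rfl
    rw [this] at h
    linarith
  · push_cast
    linarith [Int.lt_floor_add_one w]

lemma floor_add_small {w d : ℝ} (hd : 0 < d) (h : Int.fract w < 1 - d) : ⌊w + d⌋ = ⌊w⌋ := by
  apply Int.floor_eq_iff.2
  have hf : Int.fract w = w - ⌊w⌋ := rfl
  rw [hf] at h
  constructor
  · linarith [Int.floor_le w]
  · push_cast
    linarith

lemma floor_add_small_big {w d : ℝ} (hd2 : d < 1) (h : 1 - d < Int.fract w) :
    ⌊w + d⌋ = ⌊w⌋ + 1 := by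
  apply Int.floor_eq_iff.2
  have hf : Int.fract w = w - ⌊w⌋ := rfl
  rw [hf] at h
  constructor
  · push_cast
    linarith
  · push_cast
    linarith [Int.fract_lt_one w, hf ▸ Int.fract_lt_one w]

include hξ hirr hBR in
lemma xi_lt_half : ξ < 1/2 := by
  have ha := a_odd_two_le ξ hξ hirr hBR 0
  norm_num at ha
  have h0 : gauss ξ 0 = ξ := rfl
  have hflo : (2:ℤ) ≤ ⌊1/ξ⌋ := by
    have h1 : cfA ξ 1 = (⌊1 / gauss ξ 0⌋).toNat := rfl
    rw [h0] at h1
    omega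
  have h2 : (2:ℝ) ≤ 1/ξ := by
    calc (2:ℝ) = ((2:ℤ):ℝ) := by norm_num
    _ ≤ (⌊1/ξ⌋ : ℝ) := by exact_mod_cast hflo
    _ ≤ 1/ξ := Int.floor_le _
  have hpos : 0 < ξ := hξ.1
  have hne : ξ ≠ 1/2 := by
    intro h
    exact hirr ⟨(1:ℚ)/2, by rw [h]; norm_num⟩
  rcases lt_or_ge ξ (1/2) with h | h
  · exact h
  · exfalso
    rcases lt_or_eq_of_le h with h' | h'
    · have h3 : 2 * ξ ≤ 1 := by
        have := mul_le_mul_of_nonneg_right h2 hpos.le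
        rwa [one_div, inv_mul_cancel₀ (ne_of_gt hpos)] at this
      linarith
    · exact hne h'.symm

include hξ hirr hBR in
lemma EE_lt_half (n : ℕ) : EE ξ n < 1/2 := by
  calc EE ξ n ≤ EE ξ 0 := EE_le_of_le ξ hξ hirr (Nat.zero_le n)
    _ = ξ := EE_zero ξ
    _ < 1/2 := xi_lt_half ξ hξ hirr hBR

include hξ hirr hBR in
/-- window lemma for the `Qh`-shift: no point `1 ≤ j < q_{2μ+2}` has `{2jξ} < E_{2μ+1}` -/
lemma WJ (μ : ℕ) (j : ℕ) (hj : 1 ≤ j) (hjq : j < cfQ ξ (2*μ+2)) :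
    EE ξ (2*μ+1) < Int.fract ((j:ℝ)*(2*ξ)) := by
  set E := EE ξ (2*μ+1) with hE
  set y := Int.fract ((j:ℝ)*ξ) with hy
  have hjq' : j < cfQ ξ (2*μ+1+1) := by
    have e : 2*μ+1+1 = 2*μ+2 := by ring
    rw [e]; exact hjq
  have hyE : E ≤ y := BA_fract_lower ξ hξ hirr (2*μ+1) j hj hjq'
  have hEpos : 0 < E := EE_pos ξ hξ hirr _
  have h2 : Int.fract ((j:ℝ)*(2*ξ)) = if y < 1/2 then 2*y else 2*y - 1 := by
    rw [show (j:ℝ)*(2*ξ) = 2*((j:ℝ)*ξ) by ring, fract_two_mul]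
  rcases lt_or_ge y (1/2) with hc | hc
  · rw [h2, if_pos hc]
    linarith
  · rw [h2, if_neg (by linarith)]
    by_contra hcon
    push_neg at hcon
    -- y ∈ [1/2, (1+E)/2]
    have hyub : y ≤ (1+E)/2 := by linarith
    set Q := Qh ξ μ with hQ
    have hfq : Int.fract ((Q:ℝ)*ξ) = (1 - E)/2 := fract_Qh ξ hξ hirr hBR μ
    have hQlt : Q < cfQ ξ (2*μ+1) := Qh_lt ξ hξ hirr hBR μ
    rcases lt_trichotomy j Q with hjQ | hjQ | hjQ
    · -- j < Q
      set s := Q - j with hs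
      have hs1 : 1 ≤ s := by omega
      have hsq : s < cfQ ξ (2*μ+1) := by omega
      have hfs : Int.fract ((s:ℝ)*ξ) = 1 + ((1-E)/2 - y) := by
        have hsub : ((s:ℕ):ℝ)*ξ - (1 + ((1-E)/2 - y)) =
            ((⌊(Q:ℝ)*ξ⌋ - ⌊(j:ℝ)*ξ⌋ - 1 : ℤ) : ℝ) := by
          have hcast : ((s:ℕ):ℝ) = (Q:ℝ) - (j:ℝ) := by
            rw [hs, Nat.cast_sub hjQ.le]
          have e1 : (Q:ℝ)*ξ = ⌊(Q:ℝ)*ξ⌋ + (1-E)/2 := by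
            rw [← hfq]; unfold Int.fract; ring
          have e2 : (j:ℝ)*ξ = ⌊(j:ℝ)*ξ⌋ + y := by
            rw [hy]; unfold Int.fract; ring
          rw [hcast]
          push_cast
          linarith [e1, e2]
        have := Int.fract_eq_fract.2 ⟨_, hsub⟩
        rw [this, Int.fract_eq_self.2 ⟨by linarith [EE_lt_one ξ hξ hirr (2*μ+1)], by linarith⟩]
      have hup := BA_fract_upper ξ hξ hirr (2*μ) s hs1 (by
        have e : 2*μ+1 = 2*μ+1 := rfl
        exact hsq)
      have hanti := EE_strict_anti ξ hξ hirr (2*μ)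
      rw [hfs] at hup
      -- 1 + (1-E)/2 - y ≥ 1 - E  and ≤ 1 - EE (2μ)
      have : EE ξ (2*μ) ≤ E := by linarith
      linarith
    · -- j = Q : then y = (1-E)/2 < 1/2 contradiction
      have : y = (1-E)/2 := by rw [hy, hjQ]; exact hfq
      linarith
    · -- j > Q
      set r := j - Q with hr
      have hr1 : 1 ≤ r := by omega
      have hrq : r < cfQ ξ (2*μ+1+1) := by omega
      have hfr : Int.fract ((r:ℝ)*ξ) = y - (1-E)/2 := by
        have hsub : ((r:ℕ):ℝ)*ξ - (y - (1-E)/2) =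
            ((⌊(j:ℝ)*ξ⌋ - ⌊(Q:ℝ)*ξ⌋ : ℤ) : ℝ) := by
          have hcast : ((r:ℕ):ℝ) = (j:ℝ) - (Q:ℝ) := by
            rw [hr, Nat.cast_sub hjQ.le]
          have e1 : (Q:ℝ)*ξ = ⌊(Q:ℝ)*ξ⌋ + (1-E)/2 := by
            rw [← hfq]; unfold Int.fract; ring
          have e2 : (j:ℝ)*ξ = ⌊(j:ℝ)*ξ⌋ + y := by
            rw [hy]; unfold Int.fract; ring
          rw [hcast]
          push_cast
          linarith [e1, e2]
        have := Int.fract_eq_fract.2 ⟨_, hsub⟩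
        rw [this, Int.fract_eq_self.2 ⟨by linarith, by linarith [EE_lt_one ξ hξ hirr (2*μ+1)]⟩]
      have hlow := BA_fract_lower ξ hξ hirr (2*μ+1) r hr1 hrq
      rw [hfr] at hlow
      -- forces y = (1+E)/2 and fract(rξ) = E, contradiction with sum ≠ 1
      have hyeq : y = (1+E)/2 := by linarith
      have hsum : Int.fract ((r:ℝ)*ξ) + Int.fract ((cfQ ξ (2*μ+1) : ℝ)*ξ) = 1 := by
        rw [hfr, fract_q_odd ξ hξ hirr μ, hyeq, ← hE]
        ring
      exact sum_fract_ne_one ξ hirr (by omega : r + cfQ ξ (2*μ+1) ≠ 0) hsum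

end Windows

end BRW
namespace BRW

section WK

variable (ξ : ℝ) (hξ : ξ ∈ Set.Ioo (0:ℝ) 1) (hirr : Irrational ξ) (hBR : IsBR ξ)

include hξ hirr hBR in
lemma EE_odd_rec (μ : ℕ) : EE ξ (2*μ+1) = (cfA ξ (2*μ+3) : ℝ) * EE ξ (2*μ+2) + EE ξ (2*μ+3) := by
  have h := EE_rec ξ hξ hirr (2*μ+1)
  have e1 : 2*μ+1+1 = 2*μ+2 := by ring
  have e2 : 2*μ+1+2 = 2*μ+3 := by ring
  rwa [e1, e2] at h

include hξ hirr hBR in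
lemma EE_odd_ge (μ : ℕ) : 2 * EE ξ (2*μ+2) + EE ξ (2*μ+3) ≤ EE ξ (2*μ+1) := by
  rw [EE_odd_rec ξ hξ hirr hBR μ]
  have ha := a_odd_two_le' ξ hξ hirr hBR μ
  have h2 : (2:ℝ) ≤ (cfA ξ (2*μ+3) : ℝ) := by exact_mod_cast ha
  nlinarith [EE_pos ξ hξ hirr (2*μ+2)]

include hξ hirr hBR in
/-- `{Qh_{μ+1} · 2ξ} = 1 - E_{2μ+3}` -/
lemma fract_Qh1_two (μ : ℕ) : Int.fract ((Qh ξ (μ+1) : ℝ) * (2*ξ)) = 1 - EE ξ (2*μ+3) := by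
  have h2 : ((2 * Qh ξ (μ+1) : ℕ) : ℝ) = (cfQ ξ (2*(μ+1)+1) : ℝ) := by
    exact_mod_cast congrArg (fun n : ℕ => (n:ℝ)) (Qh_two ξ hξ hirr hBR (μ+1))
  have e : 2*(μ+1)+1 = 2*μ+3 := by ring
  rw [e] at h2
  have : (Qh ξ (μ+1) : ℝ) * (2*ξ) = (cfQ ξ (2*μ+3) : ℝ) * ξ := by
    push_cast at h2 ⊢
    linear_combination ξ * h2
  rw [this, fract_q_odd' ξ hξ hirr μ]

set_option maxHeartbeats 1000000 in
include hξ hirr hBR in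
/-- window lemma for the `q_{2μ+2}`-shift -/
lemma WK (μ : ℕ) (j : ℕ) (hj : 1 ≤ j) (hjq : j + cfQ ξ (2*μ+2) ≤ cfQ ξ (2*μ+3)) :
    (1 - 2 * EE ξ (2*μ+2) < Int.fract ((j:ℝ)*(2*ξ))) ↔ j = Qh ξ (μ+1) := by
  set E1 := EE ξ (2*μ+1) with hE1
  set E2 := EE ξ (2*μ+2) with hE2
  set E3 := EE ξ (2*μ+3) with hE3
  have hE2pos : 0 < E2 := EE_pos ξ hξ hirr _
  have hE3pos : 0 < E3 := EE_pos ξ hξ hirr _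
  have hE32 : E3 < E2 := EE_strict_anti ξ hξ hirr (2*μ+2)
  have hE1ge : 2*E2 + E3 ≤ E1 := EE_odd_ge ξ hξ hirr hBR μ
  have hE2half : E2 < 1/2 := EE_lt_half ξ hξ hirr hBR (2*μ+2)
  constructor
  · intro hwin
    set y := Int.fract ((j:ℝ)*ξ) with hy
    have h2 : Int.fract ((j:ℝ)*(2*ξ)) = if y < 1/2 then 2*y else 2*y - 1 := by
      rw [show (j:ℝ)*(2*ξ) = 2*((j:ℝ)*ξ) by ring, fract_two_mul]
    have hq2pos : 1 ≤ cfQ ξ (2*μ+2) := cfQ_pos ξ hξ hirr _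
    have hjq3 : j < cfQ ξ (2*μ+3) := by omega
    rcases lt_or_ge y (1/2) with hc | hc
    · rw [h2, if_pos hc] at hwin
      -- y ∈ (1/2 - E2, 1/2)
      have hylow : 1/2 - E2 < y := by linarith
      set Q := Qh ξ μ with hQ
      have hfq : Int.fract ((Q:ℝ)*ξ) = (1 - E1)/2 := fract_Qh ξ hξ hirr hBR μ
      have hQlt : Q < cfQ ξ (2*μ+1) := Qh_lt ξ hξ hirr hBR μ
      have hq12 : cfQ ξ (2*μ+1) ≤ cfQ ξ (2*μ+2) := by
        have := cfQ_le_succ ξ hξ hirr (2*μ+1)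
        have e : 2*μ+1+1 = 2*μ+2 := by ring
        rwa [e] at this
      rcases lt_trichotomy j Q with hjQ | hjQ | hjQ
      · -- j < Q : contradiction via BA at level 2μ
        exfalso
        set s := Q - j with hs
        have hs1 : 1 ≤ s := by omega
        have hsq : s < cfQ ξ (2*μ+1) := by omega
        have hfs : Int.fract ((s:ℝ)*ξ) = 1 + ((1-E1)/2 - y) := by
          have hsub : ((s:ℕ):ℝ)*ξ - (1 + ((1-E1)/2 - y)) =
              ((⌊(Q:ℝ)*ξ⌋ - ⌊(j:ℝ)*ξ⌋ - 1 : ℤ) : ℝ) := by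
            have hcast : ((s:ℕ):ℝ) = (Q:ℝ) - (j:ℝ) := by
              rw [hs, Nat.cast_sub hjQ.le]
            have e1 : (Q:ℝ)*ξ = ⌊(Q:ℝ)*ξ⌋ + (1-E1)/2 := by
              rw [← hfq]; unfold Int.fract; ring
            have e2 : (j:ℝ)*ξ = ⌊(j:ℝ)*ξ⌋ + y := by
              rw [hy]; unfold Int.fract; ring
            rw [hcast]; push_cast; linarith [e1, e2]
          have := Int.fract_eq_fract.2 ⟨_, hsub⟩
          rw [this, Int.fract_eq_self.2 ⟨by linarith [EE_lt_one ξ hξ hirr (2*μ+1)],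
            by linarith⟩]
        have hup := BA_fract_upper ξ hξ hirr (2*μ) s hs1 hsq
        have hanti := EE_strict_anti ξ hξ hirr (2*μ)
        rw [hfs] at hup
        -- fract(sξ) = 1 - (y - (1-E1)/2) with y - (1-E1)/2 ∈ (E1/2 - E2, E1/2)
        have : EE ξ (2*μ) ≤ y - (1-E1)/2 + 1 - 1 + E1/2 := by linarith
        have hlt : EE ξ (2*μ) < E1 := by
          have := EE_strict_anti ξ hξ hirr (2*μ)
          linarith [this]
        linarith [hlt, hE1ge]
      · -- j = Q : y = (1-E1)/2 but then y ≤ 1/2 - E2 - E3/2 < 1/2 - E2, contra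
        exfalso
        have : y = (1-E1)/2 := by rw [hy, hjQ]; exact hfq
        linarith
      · -- j > Q : apply Lplus
        set r := j - Q with hr
        have hr1 : 1 ≤ r := by omega
        have hrq : r < cfQ ξ (2*μ+3) := by omega
        have hfr : Int.fract ((r:ℝ)*ξ) = y - (1-E1)/2 := by
          have hsub : ((r:ℕ):ℝ)*ξ - (y - (1-E1)/2) =
              ((⌊(j:ℝ)*ξ⌋ - ⌊(Q:ℝ)*ξ⌋ : ℤ) : ℝ) := by
            have hcast : ((r:ℕ):ℝ) = (j:ℝ) - (Q:ℝ) := by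
              rw [hr, Nat.cast_sub hjQ.le]
            have e1 : (Q:ℝ)*ξ = ⌊(Q:ℝ)*ξ⌋ + (1-E1)/2 := by
              rw [← hfq]; unfold Int.fract; ring
            have e2 : (j:ℝ)*ξ = ⌊(j:ℝ)*ξ⌋ + y := by
              rw [hy]; unfold Int.fract; ring
            rw [hcast]; push_cast; linarith [e1, e2]
          have := Int.fract_eq_fract.2 ⟨_, hsub⟩
          rw [this, Int.fract_eq_self.2 ⟨by linarith, by linarith [EE_lt_one ξ hξ hirr (2*μ+1)]⟩]
        have hfr_lt : Int.fract ((r:ℝ)*ξ) < E1 := by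
          rw [hfr]; linarith
        obtain ⟨t, ht1, hta, htr, htf⟩ := Lplus ξ hξ hirr μ r hr1 hrq hfr_lt
        -- t E2 ∈ (E1/2 - E2, E1/2) forces 2t = a₃
        have hE1rec := EE_odd_rec ξ hξ hirr hBR μ
        have htflow : (t:ℝ) * E2 > E1/2 - E2 := by
          rw [← htf, hfr]; linarith
        have htfup : (t:ℝ) * E2 < E1/2 := by
          rw [← htf, hfr]; linarith
        have hx1 : (2*(t:ℝ)) * E2 < ((cfA ξ (2*μ+3):ℝ) + 1) * E2 := by
          calc (2*(t:ℝ))*E2 = 2*((t:ℝ)*E2) := by ring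
            _ < E1 := by linarith
            _ = (cfA ξ (2*μ+3):ℝ)*E2 + E3 := hE1rec
            _ < (cfA ξ (2*μ+3):ℝ)*E2 + E2 := by linarith
            _ = ((cfA ξ (2*μ+3):ℝ)+1)*E2 := by ring
        have ha3 : (2*(t:ℝ)) < (cfA ξ (2*μ+3) : ℝ) + 1 :=
          lt_of_mul_lt_mul_right hx1 hE2pos.le
        have hx2 : ((cfA ξ (2*μ+3):ℝ) - 2)*E2 < (2*(t:ℝ))*E2 := by
          calc ((cfA ξ (2*μ+3):ℝ)-2)*E2 = ((cfA ξ (2*μ+3):ℝ)*E2 + E3) - E3 - 2*E2 := by ring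
            _ = E1 - E3 - 2*E2 := by rw [← hE1rec]
            _ < E1 - 2*E2 := by linarith
            _ ≤ 2*((t:ℝ)*E2) := by linarith
            _ = (2*(t:ℝ))*E2 := by ring
        have ha3' : ((cfA ξ (2*μ+3):ℝ)) - 2 < 2*(t:ℝ) :=
          lt_of_mul_lt_mul_right hx2 hE2pos.le
        have h2t : 2*t = cfA ξ (2*μ+3) := by
          have h1 : 2*t < cfA ξ (2*μ+3) + 1 := by exact_mod_cast ha3
          have h2' : cfA ξ (2*μ+3) - 2 < 2*t := by
            have hcast : ((cfA ξ (2*μ+3):ℕ):ℝ) - 2 < (2*t:ℕ) := by push_cast; linarith [ha3']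
            have ha2 := a_odd_two_le' ξ hξ hirr hBR μ
            by_contra hcon
            push_neg at hcon
            have : ((2*t:ℕ):ℝ) ≤ ((cfA ξ (2*μ+3) - 2 : ℕ):ℝ) := by exact_mod_cast hcon
            rw [Nat.cast_sub (by omega)] at this
            push_cast at this hcast
            linarith
          have heven := hBR (μ+1)
          have e : 2*(μ+1)+1 = 2*μ+3 := by ring
          rw [e] at heven
          rcases heven with ⟨k, hk⟩
          omega
        -- j = Q + t q₂ and 2j = 2Q + a₃ q₂ = 2 Qh(μ+1)
        have hQrec := Qh_rec ξ hξ hirr hBR μ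
        have : 2*j = 2*Qh ξ (μ+1) := by
          have hj2 : j = Q + t * cfQ ξ (2*μ+2) := by omega
          have h4 : 2*j = 2*Q + 2*(t * cfQ ξ (2*μ+2)) := by omega
          have h5 : 2*(t * cfQ ξ (2*μ+2)) = (2*t) * cfQ ξ (2*μ+2) := by ring
          rw [h5, h2t] at h4
          omega
        omega
    · -- y ≥ 1/2 : 1 - y < E2, contra BA upper at level 2μ+2
      exfalso
      rw [h2, if_neg (by linarith)] at hwin
      have hup := BA_fract_upper ξ hξ hirr (2*μ+2) j hj (by
        have e : 2*μ+2+1 = 2*μ+3 := by ring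
        rw [e]; exact hjq3)
      rw [← hy] at hup
      linarith
  · intro hjQ
    subst hjQ
    rw [fract_Qh1_two ξ hξ hirr hBR μ]
    linarith

end WK

end BRW
namespace BRW

noncomputable def uu (ξ : ℝ) (j : ℕ) : ℤ := (Int.negOnePow ⌊(j:ℝ) * (2*ξ)⌋ : ℤ)

lemma S_zero (η : ℝ) : S η 0 = 0 := by
  unfold S
  simp

lemma S_succ (ξ : ℝ) (n : ℕ) : S (2*ξ) (n+1) = S (2*ξ) n + uu ξ (n+1) := by
  unfold S uu
  rw [Finset.sum_Icc_succ_top (by omega : 1 ≤ n + 1)]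

section Identities

variable (ξ : ℝ) (hξ : ξ ∈ Set.Ioo (0:ℝ) 1) (hirr : Irrational ξ) (hBR : IsBR ξ)

include hξ hirr hBR in
lemma pointJ (μ : ℕ) (j : ℕ) (hj : 1 ≤ j) (hjq : j < cfQ ξ (2*μ+2)) :
    uu ξ (j + Qh ξ μ) = - uu ξ j := by
  have hD := Dval ξ hξ hirr (2*μ+1)
  have hsgn : (-1:ℝ)^(2*μ+1) = -1 := by
    rw [pow_succ, pow_mul]; norm_num
  rw [hsgn] at hD
  have hq2 : ((2 * Qh ξ μ : ℕ) : ℝ) = (cfQ ξ (2*μ+1) : ℝ) := by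
    exact_mod_cast congrArg (fun n : ℕ => (n:ℝ)) (Qh_two ξ hξ hirr hBR μ)
  set w := (j:ℝ) * (2*ξ) with hw
  have hflr : ⌊((j + Qh ξ μ : ℕ):ℝ) * (2*ξ)⌋ = ⌊w⌋ + (cfP ξ (2*μ+1) : ℤ) := by
    have hexp : ((j + Qh ξ μ : ℕ):ℝ) * (2*ξ) = (w - EE ξ (2*μ+1)) + ((cfP ξ (2*μ+1) : ℤ):ℝ) := by
      push_cast
      push_cast at hq2
      rw [hw]
      push_cast at hD
      linear_combination hD + ξ * hq2
    rw [hexp, Int.floor_add_intCast, floor_sub_pos_small (EE_pos ξ hξ hirr (2*μ+1))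
      (WJ ξ hξ hirr hBR μ j hj hjq)]
  unfold uu
  rw [hflr, Int.negOnePow_add]
  have hodd : Odd ((cfP ξ (2*μ+1) : ℤ)) := by
    rcases p_odd_odd ξ hBR μ with ⟨k, hk⟩
    exact ⟨(k:ℤ), by exact_mod_cast hk⟩
  rw [Int.negOnePow_odd _ hodd, Units.val_mul]
  simp [hw]

include hξ hirr hBR in
lemma fract_q2_two (μ : ℕ) : Int.fract ((cfQ ξ (2*μ+2) : ℝ) * (2*ξ)) = 2 * EE ξ (2*μ+2) := by
  have hD := Dval ξ hξ hirr (2*μ+2)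
  have hsgn : (-1:ℝ)^(2*μ+2) = 1 := by
    have : 2*μ+2 = 2*(μ+1) := by ring
    rw [this, pow_mul]; norm_num
  rw [hsgn, one_mul] at hD
  have hexp : (cfQ ξ (2*μ+2) : ℝ) * (2*ξ) = ((2 * cfP ξ (2*μ+2) : ℤ):ℝ) + 2 * EE ξ (2*μ+2) := by
    push_cast
    linarith [hD]
  rw [hexp, Int.fract_intCast_add, Int.fract_eq_self.2 ⟨by linarith [EE_pos ξ hξ hirr (2*μ+2)],
    by linarith [EE_lt_half ξ hξ hirr hBR (2*μ+2)]⟩]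

include hξ hirr hBR in
lemma pointK (μ : ℕ) (j : ℕ) (hj : 1 ≤ j) (hjq : j + cfQ ξ (2*μ+2) ≤ cfQ ξ (2*μ+3)) :
    uu ξ (j + cfQ ξ (2*μ+2)) = if j = Qh ξ (μ+1) then - uu ξ j else uu ξ j := by
  have hD := Dval ξ hξ hirr (2*μ+2)
  have hsgn : (-1:ℝ)^(2*μ+2) = 1 := by
    have : 2*μ+2 = 2*(μ+1) := by ring
    rw [this, pow_mul]; norm_num
  rw [hsgn, one_mul] at hD
  set w := (j:ℝ) * (2*ξ) with hw
  set E2 := EE ξ (2*μ+2) with hE2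
  have hE2pos : 0 < E2 := EE_pos ξ hξ hirr _
  have hE2half : E2 < 1/2 := EE_lt_half ξ hξ hirr hBR (2*μ+2)
  have hexp : ((j + cfQ ξ (2*μ+2) : ℕ):ℝ) * (2*ξ) = (w + 2*E2) + ((2 * cfP ξ (2*μ+2) : ℤ):ℝ) := by
    push_cast
    rw [hw]
    push_cast at hD
    linarith [hD]
  have hWK := WK ξ hξ hirr hBR μ j hj hjq
  by_cases hQ : j = Qh ξ (μ+1)
  · rw [if_pos hQ]
    have hwin : 1 - 2*E2 < Int.fract w := hWK.2 hQ
    have hflr : ⌊((j + cfQ ξ (2*μ+2) : ℕ):ℝ) * (2*ξ)⌋ = ⌊w⌋ + 1 + 2 * cfP ξ (2*μ+2) := by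
      rw [hexp, Int.floor_add_intCast, floor_add_small_big (by linarith) hwin]
    unfold uu
    rw [hflr]
    rw [show ⌊w⌋ + 1 + 2 * (cfP ξ (2*μ+2):ℤ) = ⌊w⌋ + (2 * (cfP ξ (2*μ+2):ℤ) + 1) by ring,
      Int.negOnePow_add, Int.negOnePow_two_mul_add_one, Units.val_mul]
    simp [hw]
  · rw [if_neg hQ]
    have hnwin : ¬ (1 - 2*E2 < Int.fract w) := fun h => hQ (hWK.1 h)
    push_neg at hnwin
    have hne : Int.fract w ≠ 1 - 2*E2 := by
      intro h
      have hsum : Int.fract (((2*j : ℕ):ℝ) * ξ) + Int.fract (((2*cfQ ξ (2*μ+2) : ℕ):ℝ) * ξ) = 1 := by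
        have e1 : ((2*j : ℕ):ℝ) * ξ = w := by rw [hw]; push_cast; ring
        have e2 : ((2*cfQ ξ (2*μ+2) : ℕ):ℝ) * ξ = (cfQ ξ (2*μ+2) : ℝ) * (2*ξ) := by
          push_cast; ring
        rw [e1, e2, fract_q2_two ξ hξ hirr hBR μ, h, ← hE2]
        ring
      exact sum_fract_ne_one ξ hirr (by omega : 2*j + 2*cfQ ξ (2*μ+2) ≠ 0) hsum
    have hlt : Int.fract w < 1 - 2*E2 := lt_of_le_of_ne hnwin hne
    have hflr : ⌊((j + cfQ ξ (2*μ+2) : ℕ):ℝ) * (2*ξ)⌋ = ⌊w⌋ + 2 * cfP ξ (2*μ+2) := by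
      rw [hexp, Int.floor_add_intCast, floor_add_small (by linarith) hlt]
    unfold uu
    rw [hflr, Int.negOnePow_add, Int.negOnePow_two_mul, Units.val_mul]
    simp [hw]

include hξ hirr hBR in
lemma uu_Qh1 (μ : ℕ) : uu ξ (Qh ξ (μ+1)) = 1 := by
  unfold uu
  have hfr := fract_Qh1_two ξ hξ hirr hBR μ
  have hD := Dval ξ hξ hirr (2*μ+3)
  have hsgn : (-1:ℝ)^(2*μ+3) = -1 := by
    have : 2*μ+3 = 2*(μ+1)+1 := by ring
    rw [this, pow_succ, pow_mul]; norm_num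
  rw [hsgn] at hD
  have hq2 : ((2 * Qh ξ (μ+1) : ℕ) : ℝ) = (cfQ ξ (2*(μ+1)+1) : ℝ) := by
    exact_mod_cast congrArg (fun n : ℕ => (n:ℝ)) (Qh_two ξ hξ hirr hBR (μ+1))
  have e : 2*(μ+1)+1 = 2*μ+3 := by ring
  rw [e] at hq2
  have hexp : (Qh ξ (μ+1):ℝ) * (2*ξ) = (cfP ξ (2*μ+3) : ℝ) - EE ξ (2*μ+3) := by
    push_cast at hq2
    linear_combination ξ * hq2 + hD
  have hflr : ⌊(Qh ξ (μ+1):ℝ) * (2*ξ)⌋ = (cfP ξ (2*μ+3) : ℤ) - 1 := by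
    rw [hexp]
    have h1 : (0:ℝ) < EE ξ (2*μ+3) := EE_pos ξ hξ hirr _
    have h2 : EE ξ (2*μ+3) < 1 := EE_lt_one ξ hξ hirr _
    apply Int.floor_eq_iff.2
    constructor
    · push_cast; linarith
    · push_cast; linarith
  rw [hflr]
  rcases p_odd_odd ξ hBR (μ+1) with ⟨k, hk⟩
  have e2 : 2*(μ+1)+1 = 2*μ+3 := by ring
  rw [e2] at hk
  have heven : ((cfP ξ (2*μ+3):ℤ) - 1).negOnePow = 1 :=
    Int.negOnePow_even _ ⟨(k:ℤ), by push_cast [hk]; ring⟩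
  rw [heven]
  rfl

include hξ hirr hBR in
lemma uu_one : uu ξ 1 = 1 := by
  unfold uu
  have h1 : ⌊((1:ℕ):ℝ) * (2*ξ)⌋ = 0 := by
    apply Int.floor_eq_iff.2
    constructor
    · push_cast; nlinarith [hξ.1]
    · push_cast; nlinarith [xi_lt_half ξ hξ hirr hBR]
  rw [h1]
  rfl

include hξ hirr hBR in
/-- the J-identity : `S(n + Qh μ) = S(Qh μ) - S n` for `n < q_{2μ+2}` -/
lemma J_id (μ : ℕ) : ∀ n, n < cfQ ξ (2*μ+2) →
    S (2*ξ) (n + Qh ξ μ) = S (2*ξ) (Qh ξ μ) - S (2*ξ) n := by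
  intro n
  induction n with
  | zero => intro _; simp [S_zero]
  | succ n ih =>
    intro hn
    have hih := ih (by omega)
    have hpt := pointJ ξ hξ hirr hBR μ (n+1) (by omega) hn
    have hadd : (n+1) + Qh ξ μ = (n + Qh ξ μ) + 1 := by ring
    rw [hadd, S_succ, S_succ]
    rw [show (n + Qh ξ μ) + 1 = (n+1) + Qh ξ μ by ring, hpt, hih]
    ring

include hξ hirr hBR in
/-- the O-identity : adding `q_{2μ+1}` does not change `S` (in range) -/
lemma O_id (μ : ℕ) (M : ℕ) (hM : M + cfQ ξ (2*μ+1) ≤ cfQ ξ (2*μ+2)) :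
    S (2*ξ) (M + cfQ ξ (2*μ+1)) = S (2*ξ) M := by
  have hQ2 := Qh_two ξ hξ hirr hBR μ
  have hQpos := Qh_pos ξ hξ hirr hBR μ
  have h1 : M + Qh ξ μ < cfQ ξ (2*μ+2) := by omega
  have h2 : M < cfQ ξ (2*μ+2) := by omega
  have e1 : M + cfQ ξ (2*μ+1) = (M + Qh ξ μ) + Qh ξ μ := by omega
  rw [e1, J_id ξ hξ hirr hBR μ (M + Qh ξ μ) h1, J_id ξ hξ hirr hBR μ M h2]
  ring

include hξ hirr hBR in
/-- `S(q_{2k}) = 1` -/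
lemma Sq_id (k : ℕ) : S (2*ξ) (cfQ ξ (2*k)) = 1 := by
  induction k with
  | zero =>
    show S (2*ξ) (cfQ ξ 0) = 1
    have h01 : cfQ ξ 0 = 0 + 1 := rfl
    rw [h01, S_succ, S_zero]
    have h2 := uu_one ξ hξ hirr hBR
    norm_num [h2]
  | succ k ih =>
    -- S(q_{2k+2}) = S(q_{2k} + a_{2k+2} q_{2k+1}) = S(q_{2k})
    have hstep : cfQ ξ (2*(k+1)) = cfA ξ (2*k+2) * cfQ ξ (2*k+1) + cfQ ξ (2*k) := by
      have e : 2*(k+1) = (2*k) + 2 := by ring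
      rw [e, cfQ_step]
    have key : ∀ t, t ≤ cfA ξ (2*k+2) → S (2*ξ) (cfQ ξ (2*k) + t * cfQ ξ (2*k+1)) =
        S (2*ξ) (cfQ ξ (2*k)) := by
      intro t
      induction t with
      | zero => intro _; simp
      | succ t iht =>
        intro ht
        have hO := O_id ξ hξ hirr hBR k (cfQ ξ (2*k) + t * cfQ ξ (2*k+1)) (by
          have : cfQ ξ (2*k) + (t+1) * cfQ ξ (2*k+1) ≤ cfQ ξ (2*(k+1)) := by
            rw [hstep]
            have h1 : (t+1) * cfQ ξ (2*k+1) ≤ cfA ξ (2*k+2) * cfQ ξ (2*k+1) :=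
              Nat.mul_le_mul_right _ ht
            omega
          have e3 : cfQ ξ (2*k) + t * cfQ ξ (2*k+1) + cfQ ξ (2*k+1)
              = cfQ ξ (2*k) + (t+1) * cfQ ξ (2*k+1) := by ring
          rw [e3]
          have e4 : 2*k+2 = 2*(k+1) := by ring
          rw [e4]
          exact this)
        have e5 : cfQ ξ (2*k) + (t+1) * cfQ ξ (2*k+1)
            = cfQ ξ (2*k) + t * cfQ ξ (2*k+1) + cfQ ξ (2*k+1) := by ring
        rw [e5, hO]
        exact iht (by omega)
    have := key (cfA ξ (2*k+2)) (le_refl _)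
    rw [← ih]
    rw [← this, hstep]
    congr 1
    ring

include hξ hirr hBR in
/-- the K-identity -/
lemma K_id (μ : ℕ) : ∀ n, n + cfQ ξ (2*μ+2) ≤ cfQ ξ (2*μ+3) →
    S (2*ξ) (n + cfQ ξ (2*μ+2)) = 1 + S (2*ξ) n -
      2 * (if Qh ξ (μ+1) ≤ n then 1 else 0) := by
  intro n
  induction n with
  | zero =>
    intro _
    have hQpos := Qh_pos ξ hξ hirr hBR (μ+1)
    rw [if_neg (by omega), S_zero]
    have h := Sq_id ξ hξ hirr hBR (μ+1)
    have e : 2*(μ+1) = 2*μ+2 := by ring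
    rw [e] at h
    rw [zero_add, h]
    ring
  | succ n ih =>
    intro hn
    have hih := ih (by omega)
    have hpt := pointK ξ hξ hirr hBR μ (n+1) (by omega) hn
    have hadd : (n+1) + cfQ ξ (2*μ+2) = (n + cfQ ξ (2*μ+2)) + 1 := by ring
    rw [hadd, S_succ]
    rw [show (n + cfQ ξ (2*μ+2)) + 1 = (n+1) + cfQ ξ (2*μ+2) by ring, hpt, hih]
    rw [S_succ]
    by_cases hQ : n + 1 = Qh ξ (μ+1)
    · rw [if_pos hQ]
      have h1 : ¬ (Qh ξ (μ+1) ≤ n) := by omega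
      have h2 : Qh ξ (μ+1) ≤ n + 1 := by omega
      rw [if_neg h1, if_pos h2]
      have huQ : uu ξ (n+1) = 1 := by
        rw [hQ]; exact uu_Qh1 ξ hξ hirr hBR μ
      rw [huQ]
      ring
    · rw [if_neg hQ]
      have heq : (if Qh ξ (μ+1) ≤ n+1 then (1:ℤ) else 0) = (if Qh ξ (μ+1) ≤ n then 1 else 0) := by
        by_cases h : Qh ξ (μ+1) ≤ n
        · rw [if_pos h, if_pos (by omega)]
        · rw [if_neg h, if_neg (by omega)]
      rw [heq]
      ring

end Identities

end BRW
namespace BRW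

def Valid (ξ : ℝ) (j : ℕ) (b : ℕ → ℕ) : Prop :=
  b 0 < cfA ξ 1 ∧ (∀ i, 1 ≤ i → i ≤ j → b i ≤ cfA ξ (i+1)) ∧
    (∀ i, 1 ≤ i → i ≤ j → b i = cfA ξ (i+1) → b (i-1) = 0)

noncomputable def Nsum (ξ : ℝ) (j : ℕ) (b : ℕ → ℕ) : ℕ :=
  ∑ i ∈ Finset.range (j+1), b i * cfQ ξ i

section Digits

variable (ξ : ℝ) (hξ : ξ ∈ Set.Ioo (0:ℝ) 1) (hirr : Irrational ξ) (hBR : IsBR ξ)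

lemma Nsum_zero (b : ℕ → ℕ) : Nsum ξ 0 b = b 0 := by
  unfold Nsum
  rw [Finset.sum_range_one]
  have : cfQ ξ 0 = 1 := rfl
  rw [this, mul_one]

lemma Nsum_succ (j : ℕ) (b : ℕ → ℕ) : Nsum ξ (j+1) b = Nsum ξ j b + b (j+1) * cfQ ξ (j+1) := by
  unfold Nsum
  rw [Finset.sum_range_succ]

lemma Valid_mono {j : ℕ} {b : ℕ → ℕ} (h : Valid ξ (j+1) b) : Valid ξ j b := by
  obtain ⟨h0, h1, h2⟩ := h
  exact ⟨h0, fun i hi hij => h1 i hi (by omega), fun i hi hij => h2 i hi (by omega)⟩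

include hξ hirr in
lemma NsumBound : ∀ j b, Valid ξ j b → Nsum ξ j b < cfQ ξ (j+1) := by
  intro j
  induction j using Nat.strong_induction_on with
  | _ j IH =>
  intro b hV
  match j with
  | 0 =>
    rw [Nsum_zero]
    have : cfQ ξ 1 = cfA ξ 1 := rfl
    rw [this]
    exact hV.1
  | (j'+1) =>
    rw [Nsum_succ]
    have eI : j'+1+1 = j'+2 := by omega
    rw [eI]
    have hstep : cfQ ξ (j'+2) = cfA ξ (j'+2) * cfQ ξ (j'+1) + cfQ ξ j' := by
      rw [cfQ_step]
    have hble := hV.2.1 (j'+1) (by omega) (le_refl _)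
    rw [eI] at hble
    rcases eq_or_lt_of_le hble with heq | hlt
    · -- b (j'+1) = a (j'+2) : then b j' = 0
      have hbz := hV.2.2 (j'+1) (by omega) (le_refl _) heq
      simp only [Nat.add_sub_cancel] at hbz
      have hNj : Nsum ξ j' b < cfQ ξ j' := by
        match j' with
        | 0 =>
          rw [Nsum_zero, hbz]
          exact cfQ_pos ξ hξ hirr 0
        | (j''+1) =>
          rw [Nsum_succ, hbz, zero_mul, add_zero]
          exact IH j'' (by omega) b (Valid_mono ξ (Valid_mono ξ hV))
      rw [heq]
      omega
    · -- b (j'+1) ≤ a - 1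
      have hNj : Nsum ξ j' b < cfQ ξ (j'+1) := IH j' (by omega) b (Valid_mono ξ hV)
      have h1 : b (j'+1) * cfQ ξ (j'+1) ≤ (cfA ξ (j'+2) - 1) * cfQ ξ (j'+1) :=
        Nat.mul_le_mul_right _ (by omega)
      have h2 : (cfA ξ (j'+2) - 1) * cfQ ξ (j'+1) + cfQ ξ (j'+1) = cfA ξ (j'+2) * cfQ ξ (j'+1) := by
        have ha := cfA_ge_one ξ hξ hirr (j'+1)
        have : cfA ξ (j'+2) - 1 + 1 = cfA ξ (j'+2) := by omega
        calc (cfA ξ (j'+2) - 1) * cfQ ξ (j'+1) + cfQ ξ (j'+1)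
            = (cfA ξ (j'+2) - 1 + 1) * cfQ ξ (j'+1) := by ring
          _ = cfA ξ (j'+2) * cfQ ξ (j'+1) := by rw [this]
      have h3 := cfQ_pos ξ hξ hirr j'
      omega

include hξ hirr hBR in
lemma Ostrip (μ : ℕ) : ∀ t M, M + t * cfQ ξ (2*μ+1) ≤ cfQ ξ (2*μ+2) →
    S (2*ξ) (M + t * cfQ ξ (2*μ+1)) = S (2*ξ) M := by
  intro t
  induction t with
  | zero => intro M _; simp
  | succ t ih =>
    intro M h
    have e : M + (t+1) * cfQ ξ (2*μ+1) = (M + t * cfQ ξ (2*μ+1)) + cfQ ξ (2*μ+1) := by ring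
    rw [e, O_id ξ hξ hirr hBR μ _ (by omega)]
    exact ih M (by omega)

include hξ hirr hBR in
lemma q_even_le_Qh (μ : ℕ) : cfQ ξ (2*μ) ≤ Qh ξ μ := by
  have h2 := Qh_two ξ hξ hirr hBR μ
  have key : 2 * cfQ ξ (2*μ) ≤ cfQ ξ (2*μ+1) := by
    match μ with
    | 0 =>
      have : cfQ ξ 1 = cfA ξ 1 := rfl
      have h0 : cfQ ξ 0 = 1 := rfl
      have ha := a_odd_two_le ξ hξ hirr hBR 0
      norm_num at ha ⊢
      omega
    | (ν+1) =>
      have e : 2*(ν+1)+1 = (2*ν+1)+2 := by ring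
      have hstep : cfQ ξ ((2*ν+1)+2) = cfA ξ ((2*ν+1)+2) * cfQ ξ ((2*ν+1)+1) + cfQ ξ (2*ν+1) := by
        rw [cfQ_step]
      have ha := a_odd_two_le ξ hξ hirr hBR (ν+1)
      have e2 : 2*(ν+1)+1 = 2*ν+1+2 := by ring
      rw [e2] at ha
      have e3 : 2*(ν+1) = 2*ν+1+1 := by ring
      rw [e, hstep, e3]
      have hq := cfQ_pos ξ hξ hirr (2*ν+1)
      nlinarith [hstep, ha, hq]
  omega

include hξ hirr hBR in
lemma Qh_le_q_even (μ : ℕ) : Qh ξ μ ≤ cfQ ξ (2*μ+2) := by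
  have h1 := Qh_lt ξ hξ hirr hBR μ
  have h2 := cfQ_le_succ ξ hξ hirr (2*μ+1)
  have e : 2*μ+1+1 = 2*μ+2 := by ring
  rw [e] at h2
  omega

include hξ hirr hBR in
lemma xi_bounds : (cfA ξ 1 : ℝ) * ξ < 1 ∧ 1 < ((cfA ξ 1 : ℝ) + 1) * ξ := by
  have hD := Dval ξ hξ hirr 1
  have hq1 : cfQ ξ 1 = cfA ξ 1 := rfl
  have hp1 : cfP ξ 1 = 1 := rfl
  rw [hq1, hp1] at hD
  norm_num at hD
  -- hD : a₁ ξ - 1 = - EE ξ 1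
  have hE1pos := EE_pos ξ hξ hirr 1
  have hE1 : EE ξ 1 = ξ * gauss ξ 1 := by
    rw [EE_succ, EE_zero]
  have hlt : EE ξ 1 < ξ := by
    rw [hE1]
    have := mul_lt_mul_of_pos_left (gauss_lt_one ξ hξ hirr 1) hξ.1
    rwa [mul_one] at this
  constructor
  · linarith
  · linarith

include hξ hirr hBR in
lemma uu_base_pos (jj : ℕ) (h1 : 1 ≤ jj) (h2 : 2*jj ≤ cfA ξ 1) : uu ξ jj = 1 := by
  unfold uu
  obtain ⟨hub, _⟩ := xi_bounds ξ hξ hirr hBR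
  have hfl : ⌊(jj:ℝ) * (2*ξ)⌋ = 0 := by
    apply Int.floor_eq_iff.2
    constructor
    · push_cast
      nlinarith [hξ.1]
    · push_cast
      have hj2 : ((2*jj : ℕ):ℝ) ≤ (cfA ξ 1 : ℝ) := by exact_mod_cast h2
      push_cast at hj2
      nlinarith [hξ.1]
  rw [hfl]
  rfl

include hξ hirr hBR in
lemma uu_base_neg (jj : ℕ) (h1 : cfA ξ 1 < 2*jj) (h2 : jj < cfA ξ 1) : uu ξ jj = -1 := by
  unfold uu
  obtain ⟨hub, hlb⟩ := xi_bounds ξ hξ hirr hBR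
  have ha2 := a_odd_two_le ξ hξ hirr hBR 0
  norm_num at ha2
  have hfl : ⌊(jj:ℝ) * (2*ξ)⌋ = 1 := by
    apply Int.floor_eq_iff.2
    have hj1 : ((cfA ξ 1 : ℕ):ℝ) + 1 ≤ ((2*jj : ℕ):ℝ) := by exact_mod_cast h1
    have hj2 : ((jj:ℕ):ℝ) ≤ ((cfA ξ 1 : ℕ):ℝ) - 1 := by
      have : ((jj:ℕ):ℝ) + 1 ≤ ((cfA ξ 1 : ℕ):ℝ) := by exact_mod_cast h2
      linarith
    push_cast at hj1 hj2 ⊢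
    constructor
    · nlinarith [hξ.1]
    · -- 2 jj ξ < 2 : jj ≤ a₁ - 1 so 2jjξ ≤ 2(a₁-1)ξ < 2(a₁ ξ) - 2ξ < 2
      nlinarith [hξ.1, hub]
  rw [hfl]
  rfl

include hξ hirr hBR in
lemma Sbase : ∀ c : ℕ, 1 ≤ c → c < cfA ξ 1 → 1 ≤ S (2*ξ) c := by
  have ha2 := a_odd_two_le ξ hξ hirr hBR 0
  norm_num at ha2
  rcases hBR 0 with ⟨Ah, hAh⟩
  norm_num at hAh
  -- hAh : cfA ξ 1 = Ah + Ah
  have phase1 : ∀ c : ℕ, c ≤ Ah → S (2*ξ) c = c := by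
    intro c
    induction c with
    | zero => intro _; simp [S_zero]
    | succ c ih =>
      intro hc
      rw [S_succ, ih (by omega), uu_base_pos ξ hξ hirr hBR (c+1) (by omega) (by omega)]
      push_cast; ring
  have phase2 : ∀ c : ℕ, Ah ≤ c → c < cfA ξ 1 → S (2*ξ) c = (Ah : ℤ) + Ah - c := by
    intro c
    induction c with
    | zero => intro h1 h2; rw [S_zero]; omega
    | succ c ih =>
      intro h1 h2
      rcases Nat.lt_or_ge c Ah with h | h
      · -- c + 1 = Ah
        have : c + 1 = Ah := by omega
        rw [phase1 (c+1) (by omega)]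
        omega
      · rw [S_succ, ih h (by omega), uu_base_neg ξ hξ hirr hBR (c+1) (by omega) (by omega)]
        push_cast; ring
  intro c hc1 hc2
  rcases Nat.lt_or_ge c (Ah+1) with h | h
  · rw [phase1 c (by omega)]; omega
  · rw [phase2 c (by omega) hc2]; omega

end Digits

end BRW

namespace BRW

section Main

variable (ξ : ℝ) (hξ : ξ ∈ Set.Ioo (0:ℝ) 1) (hirr : Irrational ξ) (hBR : IsBR ξ)

include hξ hirr hBR in
lemma G1 : ∀ j b, Valid ξ j b → (∀ i, i ≤ j → Even i → b i = 0) →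
    S (2*ξ) (Nsum ξ j b) = 0 := by
  intro j
  induction j using Nat.strong_induction_on with
  | _ j IH =>
  intro b hV hz
  match j with
  | 0 =>
    rw [Nsum_zero, hz 0 (le_refl _) ⟨0, rfl⟩]
    exact S_zero _
  | (j'+1) =>
    rcases Nat.even_or_odd (j'+1) with he | ho
    · rw [Nsum_succ, hz (j'+1) (le_refl _) he, zero_mul, add_zero]
      exact IH j' (by omega) b (Valid_mono ξ hV) (fun i hi hei => hz i (by omega) hei)
    · obtain ⟨μ, hμ⟩ := ho
      have hj' : j' = 2*μ := by omega
      subst hj'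
      have hbound := NsumBound ξ hξ hirr (2*μ+1) b hV
      rw [Nsum_succ] at hbound ⊢
      have e2 : 2*μ+1+1 = 2*μ+2 := by omega
      rw [e2] at hbound
      rw [Ostrip ξ hξ hirr hBR μ (b (2*μ+1)) (Nsum ξ (2*μ) b) (by omega)]
      exact IH (2*μ) (by omega) b (Valid_mono ξ hV) (fun i hi hei => hz i (by omega) hei)

include hξ hirr hBR in
lemma G2 : ∀ j b, Valid ξ j b → (∃ i, i ≤ j ∧ Even i ∧ b i ≠ 0) →
    1 ≤ S (2*ξ) (Nsum ξ j b) := by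
  intro j
  induction j using Nat.strong_induction_on with
  | _ j IH =>
  intro b hV hw
  match j with
  | 0 =>
    obtain ⟨i, hi, _, hne⟩ := hw
    have hi0 : i = 0 := by omega
    subst hi0
    rw [Nsum_zero]
    exact Sbase ξ hξ hirr hBR (b 0) (by omega) hV.1
  | (j'+1) =>
    by_cases hbj : b (j'+1) = 0
    · rw [Nsum_succ, hbj, zero_mul, add_zero]
      apply IH j' (by omega) b (Valid_mono ξ hV)
      obtain ⟨i, hi, hei, hne⟩ := hw
      refine ⟨i, ?_, hei, hne⟩
      rcases Nat.eq_or_lt_of_le hi with h | h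
      · exfalso; rw [h] at hne; exact hne hbj
      · omega
    · rcases Nat.even_or_odd (j'+1) with he | ho
      · -- even top index j'+1 = 2μ+2 with digit c ≥ 1
        obtain ⟨k, hk⟩ := he
        have hk1 : 1 ≤ k := by omega
        set μ := k - 1 with hμdef
        have hj' : j' = 2*μ+1 := by omega
        subst hj'
        -- setup
        set N' := Nsum ξ (2*μ+1) b with hN'def
        set c := b (2*μ+1+1) with hcdef
        set q2 := cfQ ξ (2*μ+2) with hq2def
        have e2 : 2*μ+1+1 = 2*μ+2 := by omega
        have e3 : 2*μ+2+1 = 2*μ+3 := by omega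
        have hc1 : 1 ≤ c := by omega
        have hca : c ≤ cfA ξ (2*μ+3) := by
          have := hV.2.1 (2*μ+1+1) (by omega) (le_refl _)
          rw [e2] at this
          rw [← e3]
          have e4 : 2*μ+2+1 = 2*μ+1+1+1 := by omega
          rw [e3]
          have := hV.2.1 (2*μ+1+1) (by omega) (le_refl _)
          have e5 : 2*μ+1+1+1 = 2*μ+3 := by omega
          rw [e5] at this
          exact this
        have hN'q : N' < q2 := by
          have := NsumBound ξ hξ hirr (2*μ+1) b (Valid_mono ξ hV)
          rw [e2] at this
          exact this
        have htot : N' + c * q2 < cfQ ξ (2*μ+3) := by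
          have := NsumBound ξ hξ hirr (2*μ+1+1) b hV
          rw [Nsum_succ] at this
          have e6 : 2*μ+1+1+1 = 2*μ+3 := by omega
          rw [e6, e2] at this
          exact this
        have hS0 : 0 ≤ S (2*ξ) N' := by
          by_cases hex : ∃ i, i ≤ 2*μ+1 ∧ Even i ∧ b i ≠ 0
          · have h9 := IH (2*μ+1) (by omega) b (Valid_mono ξ hV) hex
            rw [← hN'def] at h9
            omega
          · push_neg at hex
            have h9 := G1 ξ hξ hirr hBR (2*μ+1) b (Valid_mono ξ hV) hex
            rw [← hN'def] at h9
            omega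
        -- half of a₃
        obtain ⟨Ah3, hAh3⟩ := hBR (μ+1)
        have eA : 2*(μ+1)+1 = 2*μ+3 := by omega
        rw [eA] at hAh3
        -- hAh3 : cfA ξ (2μ+3) = Ah3 + Ah3
        have hAh3pos : 1 ≤ Ah3 := by
          have := a_odd_two_le' ξ hξ hirr hBR μ
          omega
        have hQμpos := Qh_pos ξ hξ hirr hBR μ
        have hQμle : Qh ξ μ ≤ q2 := by
          have h1 := Qh_lt ξ hξ hirr hBR μ
          have h2 := cfQ_le_succ ξ hξ hirr (2*μ+1)
          rw [e2] at h2
          omega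
        have hQrec : Qh ξ (μ+1) = Ah3 * q2 + Qh ξ μ := by
          have h := Qh_rec ξ hξ hirr hBR μ
          rw [hAh3] at h
          have : (Ah3 + Ah3) * cfQ ξ (2*μ+2) = Ah3 * q2 + Ah3 * q2 := by
            rw [Nat.add_mul, hq2def]
          rw [this] at h
          omega
        -- indicator evaluations
        have ind_lt : ∀ s, s+1 ≤ Ah3 → ¬ (Qh ξ (μ+1) ≤ N' + s*q2) := by
          intro s hs
          have h1 : (s+1) * q2 ≤ Ah3 * q2 := Nat.mul_le_mul_right _ hs
          have h2 : (s+1) * q2 = s*q2 + q2 := by ring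
          omega
        have ind_eq : (Qh ξ (μ+1) ≤ N' + Ah3*q2) ↔ Qh ξ μ ≤ N' := by omega
        have ind_gt : ∀ s, Ah3+1 ≤ s → Qh ξ (μ+1) ≤ N' + s*q2 := by
          intro s hs
          have h1 : (Ah3+1) * q2 ≤ s * q2 := Nat.mul_le_mul_right _ hs
          have h2 : (Ah3+1) * q2 = Ah3*q2 + q2 := by ring
          omega
        -- phase 1
        have phase1 : ∀ t, t ≤ Ah3 → t ≤ c → S (2*ξ) (N' + t*q2) = t + S (2*ξ) N' := by
          intro t
          induction t with
          | zero => intro _ _; simp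
          | succ t iht =>
            intro ht hc
            have hrange : (N' + t*q2) + q2 ≤ cfQ ξ (2*μ+3) := by
              have h1 : (t+1) * q2 ≤ c * q2 := Nat.mul_le_mul_right _ hc
              have h2 : (t+1) * q2 = t*q2 + q2 := by ring
              omega
            have hK := K_id ξ hξ hirr hBR μ (N' + t*q2) hrange
            rw [if_neg (ind_lt t ht)] at hK
            have e7 : N' + (t+1)*q2 = (N' + t*q2) + q2 := by ring
            rw [e7, hK, iht (by omega) (by omega)]
            push_cast
            ring
        rcases le_or_gt c Ah3 with hcA | hcA
        · -- c ≤ Ah3 : S = c + S N' ≥ 1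
          have := phase1 c hcA (le_refl _)
          rw [Nsum_succ, e2, ← hN'def, ← hcdef, ← hq2def, this]
          omega
        · -- Ah3 < c
          set δ : ℤ := if Qh ξ μ ≤ N' then 1 else 0 with hδdef
          have hδ01 : δ = 0 ∨ δ = 1 := by
            rw [hδdef]; split_ifs <;> simp
          have phase2 : ∀ t, Ah3 + 1 ≤ t → t ≤ c →
              S (2*ξ) (N' + t*q2) = S (2*ξ) N' + 2*(Ah3:ℤ) + 2 - t - 2*δ := by
            intro t
            induction t with
            | zero => intro h _; omega
            | succ t iht =>
              intro ht hc
              have hrange : (N' + t*q2) + q2 ≤ cfQ ξ (2*μ+3) := by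
                have h1 : (t+1) * q2 ≤ c * q2 := Nat.mul_le_mul_right _ hc
                have h2 : (t+1) * q2 = t*q2 + q2 := by ring
                omega
              have hK := K_id ξ hξ hirr hBR μ (N' + t*q2) hrange
              have e7 : N' + (t+1)*q2 = (N' + t*q2) + q2 := by ring
              rcases Nat.lt_or_ge t (Ah3+1) with htA | htA
              · -- t = Ah3 : base case
                have htA' : t = Ah3 := by omega
                have hind : (if Qh ξ (μ+1) ≤ N' + t*q2 then (1:ℤ) else 0) = δ := by
                  rw [htA', hδdef]
                  by_cases h : Qh ξ μ ≤ N'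
                  · rw [if_pos (ind_eq.2 h), if_pos h]
                  · rw [if_neg (fun hh => h (ind_eq.1 hh)), if_neg h]
                rw [hind] at hK
                rw [e7, hK, htA', phase1 Ah3 (le_refl _) (by omega)]
                push_cast
                ring
              · -- t ≥ Ah3 + 1 : indicator 1
                rw [if_pos (ind_gt t htA)] at hK
                rw [e7, hK, iht htA (by omega)]
                push_cast
                ring
          have hfin := phase2 c (by omega) (le_refl _)
          rw [Nsum_succ, e2, ← hN'def, ← hcdef, ← hq2def, hfin]
          rcases hδ01 with h0 | h1
          · -- δ = 0 : S = S N' + 2Ah3 + 2 - c ≥ S N' + 2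
            rw [h0]
            have : (c:ℤ) ≤ 2*Ah3 := by
              have : c ≤ cfA ξ (2*μ+3) := hca
              rw [hAh3] at this
              omega
            omega
          · rw [h1]
            rcases Nat.lt_or_ge c (cfA ξ (2*μ+3)) with hclt | hcge
            · -- c < a₃ : S = S N' + 2Ah3 - c ≥ S N' + 1
              have : (c:ℤ) ≤ 2*Ah3 - 1 := by
                rw [hAh3] at hclt
                omega
              omega
            · -- c = a₃ : then b (2μ+1) = 0 and S N' ≥ 1
              have hceq : c = cfA ξ (2*μ+3) := by omega
              have hbz : b (2*μ+1) = 0 := by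
                have := hV.2.2 (2*μ+1+1) (by omega) (le_refl _) (by
                  rw [← hcdef]
                  have e8 : 2*μ+1+1+1 = 2*μ+3 := by omega
                  rw [e8]
                  exact hceq)
                simpa using this
              -- δ = 1 means Qh μ ≤ N'
              have hQN : Qh ξ μ ≤ N' := by
                by_contra hcon
                rw [hδdef, if_neg hcon] at h1
                omega
              -- show some even digit below is nonzero
              have hex : ∃ i, i ≤ 2*μ+1 ∧ Even i ∧ b i ≠ 0 := by
                by_contra hcon
                push_neg at hcon
                have hz : ∀ i, i ≤ 2*μ+1 → Even i → b i = 0 := hcon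
                -- then N' < Qh μ, contradiction
                have hsmall : N' < Qh ξ μ := by
                  have hb2μ : b (2*μ) = 0 := hz (2*μ) (by omega) ⟨μ, by ring⟩
                  match μ with
                  | 0 =>
                    have : N' = 0 := by
                      rw [hN'def]
                      have : Nsum ξ 1 b = Nsum ξ 0 b + b 1 * cfQ ξ 1 := Nsum_succ ξ 0 b
                      rw [show (2*0+1 : ℕ) = 1 by rfl, this, Nsum_zero]
                      have hb0 : b 0 = 0 := hz 0 (by omega) ⟨0, rfl⟩
                      have hb1 : b 1 = 0 := by
                        have := hbz
                        simpa using this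
                      rw [hb0, hb1]
                      ring
                    omega
                  | (ν+1) =>
                    -- N' = Nsum (2ν+1) b < q (2ν+2) = q (2μ) ≤ Qh μ
                    have hNeq : N' = Nsum ξ (2*ν+1) b := by
                      rw [hN'def]
                      have e9 : 2*(ν+1)+1 = (2*ν+2)+1 := by omega
                      rw [e9, Nsum_succ]
                      have hbtop : b (2*ν+2+1) = 0 := by
                        have e10 : 2*ν+2+1 = 2*(ν+1)+1 := by omega
                        rw [e10]
                        exact hbz
                      rw [hbtop, zero_mul, add_zero]
                      have e11 : 2*ν+2 = (2*ν+1)+1 := by omega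
                      rw [e11, Nsum_succ]
                      have hbtop2 : b (2*ν+1+1) = 0 := by
                        have e12 : 2*ν+1+1 = 2*(ν+1) := by omega
                        rw [e12]
                        exact hb2μ
                      rw [hbtop2, zero_mul, add_zero]
                    have hlt : Nsum ξ (2*ν+1) b < cfQ ξ (2*ν+2) := by
                      have := NsumBound ξ hξ hirr (2*ν+1) b (by
                        have h1 : Valid ξ ((2*ν+1)+1+1+1) b := by
                          have e : (2*ν+1)+1+1+1 = 2*(ν+1)+1+1 := by omega
                          rw [e]; exact hV
                        exact Valid_mono ξ (Valid_mono ξ (Valid_mono ξ h1)))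
                      have e13 : 2*ν+1+1 = 2*ν+2 := by omega
                      rwa [e13] at this
                    have hle : cfQ ξ (2*(ν+1)) ≤ Qh ξ (ν+1) := q_even_le_Qh ξ hξ hirr hBR (ν+1)
                    have e14 : 2*(ν+1) = 2*ν+2 := by omega
                    rw [e14] at hle
                    omega
                omega
              have := IH (2*μ+1) (by omega) b (Valid_mono ξ hV) hex
              rw [← hN'def] at this
              have hcc : (c:ℤ) = 2*Ah3 := by
                rw [hceq, hAh3]; push_cast; ring
              omega
      · -- odd top index : strip
        obtain ⟨μ, hμ⟩ := ho
        have hj' : j' = 2*μ := by omega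
        subst hj'
        have hbound := NsumBound ξ hξ hirr (2*μ+1) b hV
        rw [Nsum_succ] at hbound ⊢
        have e2 : 2*μ+1+1 = 2*μ+2 := by omega
        rw [e2] at hbound
        rw [Ostrip ξ hξ hirr hBR μ (b (2*μ+1)) (Nsum ξ (2*μ) b) (by omega)]
        apply IH (2*μ) (by omega) b (Valid_mono ξ hV)
        obtain ⟨i, hi, hei, hne⟩ := hw
        refine ⟨i, ?_, hei, hne⟩
        rcases Nat.eq_or_lt_of_le hi with h | h
        · exfalso
          rw [h] at hei
          rcases hei with ⟨k, hk⟩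
          omega
        · omega

end Main

end BRW


/-- For a BR-number `ξ`, an integer `N` with `ξ`-Ostrowski representation
`N = ∑_{i=0}^j b_i·q_i` is a zero of `S_n(2ξ)` iff all even-indexed digits vanish. -/
theorem stmt_11 (ξ : ℝ) (hξ : ξ ∈ Set.Ioo (0 : ℝ) 1) (hirr : Irrational ξ) (hBR : IsBR ξ)
    (N j : ℕ) (b : ℕ → ℕ)
    (hrep : N = ∑ i ∈ Finset.range (j + 1), b i * cfQ ξ i)
    (hb0 : b 0 < cfA ξ 1)
    (hb : ∀ i : ℕ, 1 ≤ i → b i ≤ cfA ξ (i + 1))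
    (hbz : ∀ i : ℕ, 1 ≤ i → b i = cfA ξ (i + 1) → b (i - 1) = 0) :
    S (2 * ξ) N = 0 ↔ ∀ i : ℕ, i ≤ j → Even i → b i = 0 := by
  have hV : BRW.Valid ξ j b := ⟨hb0, fun i hi _ => hb i hi, fun i hi _ hbe => hbz i hi hbe⟩
  have hNs : N = BRW.Nsum ξ j b := hrep
  constructor
  · intro hS i hij hev
    by_contra hne
    have h2 := BRW.G2 ξ hξ hirr hBR j b hV ⟨i, hij, hev, hne⟩
    rw [← hNs] at h2
    omega
  · intro hz
    rw [hNs]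
    exact BRW.G1 ξ hξ hirr hBR j b hV hz
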